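/- arXiv:2103.16065 — 4 statements merged into one kernel-verified Lean document; each statement's English description precedes it below -/
import Mathlib

section
/- Assume the CRK setup. Suppose that for each n = 0, 1, …, N−1 a family of functions z_n, δ_t z_n, z_{n+1}, δ_t z_{n+1}, z_{n,j}, δ_t z_{n,j}, δ_x z_{n,j}, δ_t δ_x z_{n,j}, δ_x δ_t z_{n,j} : [0,1] → ℝ^d (j = 1, …, r) satisfies all hypotheses (i)–(vii) of Theorem 3.4 (with skew-symmetric M, K, S continuously differentiable in its first argument, grid points x_n = x_0 + n Δx, Δt ≠ 0, Δx ≠ 0, invertible (ã_{jk}) and weights b̃_j satisfying the symplecticity condition), where the functions z_{n+1}, δ_t z_{n+1} produced on cell n coincide with the functions z_{n+1}, δ_t z_{n+1} of cell n+1, and assume periodicity: z_N(τ) = z_0(τ) and δ_t z_N(τ) = δ_t z_0(τ) for all τ ∈ [0,1]. Then the discrete global energy is conserved: Δx Σ_{n=0}^{N−1} Σ_{j=1}^r b̃_j E_{n,j}¹ = Δx Σ_{n=0}^{N−1} Σ_{j=1}^r b̃_j E_{n,j}⁰, where E_{n,j}^α = S(z_{n,j}(α), x_n + c̃_j Δx)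 − (1/2) z_{n,j}(α)ᵀ K δ_x z_{n,j}(α) for α ∈ {0,1}. -/
open scoped Matrix

noncomputable def dotCLM {d : ℕ} (g : Fin d → ℝ) : (Fin d → ℝ) →L[ℝ] ℝ :=
  ∑ i : Fin d, g i • (ContinuousLinearMap.proj i : (Fin d → ℝ) →L[ℝ] ℝ)

noncomputable def lag {s : ℕ} (c : Fin s → ℝ) (i : Fin s) (τ : ℝ) : ℝ :=
  (Lagrange.basis (Finset.univ : Finset (Fin s)) c i).eval τ

noncomputable def bw {s : ℕ} (c : Fin s → ℝ) (i : Fin s) : ℝ :=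
  ∫ τ in (0:ℝ)..1, lag c i τ

noncomputable def Acrk {s : ℕ} (c : Fin s → ℝ) (τ σ : ℝ) : ℝ :=
  ∑ i : Fin s, (1 / bw c i) * (∫ α in (0:ℝ)..τ, lag c i α) * lag c i σ

noncomputable def wavg {s : ℕ} (c : Fin s → ℝ) (i : Fin s) {G : Type*}
    [NormedAddCommGroup G] [NormedSpace ℝ G] (f : ℝ → G) : G :=
  (1 / bw c i) • ∫ τ in (0:ℝ)..1, lag c i τ • f τ

noncomputable def Lint {s : ℕ} (c : Fin s → ℝ) (i : Fin s) (τ : ℝ) : ℝ :=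
  ∫ α in (0:ℝ)..τ, lag c i α

section basic
variable {s : ℕ} (c : Fin s → ℝ)

lemma lag_continuous (i : Fin s) : Continuous (lag c i) := Polynomial.continuous _

lemma Lint_hasDerivAt (i : Fin s) (τ : ℝ) : HasDerivAt (Lint c i) (lag c i τ) τ :=
  intervalIntegral.integral_hasDerivAt_right ((lag_continuous c i).intervalIntegrable _ _)
    ((lag_continuous c i).stronglyMeasurableAtFilter _ _) (lag_continuous c i).continuousAt

lemma Lint_continuous (i : Fin s) : Continuous (Lint c i) :=
  continuous_iff_continuousAt.2 fun τ => (Lint_hasDerivAt c i τ).continuousAt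

lemma uIcc01 : Set.uIcc (0:ℝ) 1 = Set.Icc 0 1 := Set.uIcc_of_le zero_le_one

set_option linter.unusedSectionVars false
variable {G : Type*} [NormedAddCommGroup G] [NormedSpace ℝ G] [CompleteSpace G]

lemma lag_smul_intervalIntegrable (i : Fin s) {f : ℝ → G}
    (hf : ContinuousOn f (Set.Icc 0 1)) :
    IntervalIntegrable (fun τ => lag c i τ • f τ) MeasureTheory.volume 0 1 := by
  apply ContinuousOn.intervalIntegrable
  rw [uIcc01]
  exact ((lag_continuous c i).continuousOn).smul hf

lemma integral_lag_smul (i : Fin s) (hb : bw c i ≠ 0) (f : ℝ → G) :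
    ∫ τ in (0:ℝ)..1, lag c i τ • f τ = bw c i • wavg c i f := by
  rw [wavg, smul_smul, mul_one_div, div_self hb, one_smul]

lemma wavg_congr (i : Fin s) {f g : ℝ → G}
    (h : ∀ τ ∈ Set.Icc (0:ℝ) 1, f τ = g τ) : wavg c i f = wavg c i g := by
  unfold wavg
  congr 1
  apply intervalIntegral.integral_congr
  intro τ hτ
  rw [uIcc01] at hτ
  show lag c i τ • f τ = lag c i τ • g τ
  rw [h τ hτ]

lemma integral_Acrk (hb : ∀ i, bw c i ≠ 0) {f : ℝ → G}
    (hf : ContinuousOn f (Set.Icc 0 1)) (τ : ℝ) :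
    ∫ σ in (0:ℝ)..1, Acrk c τ σ • f σ = ∑ i, Lint c i τ • wavg c i f := by
  have h1 : ∀ σ, Acrk c τ σ • f σ
      = ∑ i, ((1 / bw c i) * Lint c i τ) • (lag c i σ • f σ) := by
    intro σ
    rw [Acrk, Finset.sum_smul]
    refine Finset.sum_congr rfl fun i _ => ?_
    rw [smul_smul]
    rfl
  rw [intervalIntegral.integral_congr (g := fun σ => ∑ i, ((1 / bw c i) * Lint c i τ) • (lag c i σ • f σ)) (fun σ _ => h1 σ)]
  have hii : ∀ i : Fin s, IntervalIntegrable
      (fun x => ((1 / bw c i) * Lint c i τ) • (lag c i x • f x)) MeasureTheory.volume 0 1 := by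
    intro i
    apply ContinuousOn.intervalIntegrable
    rw [uIcc01]
    exact (((lag_continuous c i).continuousOn).smul hf).const_smul _
  rw [intervalIntegral.integral_finset_sum (fun i _ => hii i)]
  refine Finset.sum_congr rfl fun i _ => ?_
  rw [intervalIntegral.integral_smul, integral_lag_smul c i (hb i), smul_smul]
  congr 1
  rw [one_div, mul_comm, ← mul_assoc, mul_inv_cancel₀ (hb i), one_mul]

end basic

section dotlem
open Matrix
variable {d : ℕ}

lemma dotCLM_apply (g w : Fin d → ℝ) : dotCLM g w = g ⬝ᵥ w := by
  simp [dotCLM, dotProduct]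

noncomputable def mulVecCLM (A : Matrix (Fin d) (Fin d) ℝ) : (Fin d → ℝ) →L[ℝ] (Fin d → ℝ) :=
  LinearMap.toContinuousLinearMap A.mulVecLin

lemma mulVecCLM_apply (A : Matrix (Fin d) (Fin d) ℝ) (v : Fin d → ℝ) :
    mulVecCLM A v = A.mulVec v := rfl

lemma skew_dot {K : Matrix (Fin d) (Fin d) ℝ} (hK : Kᵀ = -K) (u v : Fin d → ℝ) :
    u ⬝ᵥ K.mulVec v = -(v ⬝ᵥ K.mulVec u) := by
  rw [Matrix.dotProduct_mulVec, ← Matrix.mulVec_transpose, hK, Matrix.neg_mulVec,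
    neg_dotProduct, dotProduct_comm]

lemma skew_dot_self {K : Matrix (Fin d) (Fin d) ℝ} (hK : Kᵀ = -K) (u : Fin d → ℝ) :
    u ⬝ᵥ K.mulVec u = 0 := by
  have := skew_dot hK u u
  linarith

lemma continuous_dot {u v : ℝ → Fin d → ℝ} (hu : Continuous u) (hv : Continuous v) :
    Continuous fun τ => u τ ⬝ᵥ v τ := by
  simp only [dotProduct]
  exact continuous_finset_sum _ fun m _ =>
    ((continuous_apply m).comp hu).mul ((continuous_apply m).comp hv)

lemma continuousOn_dot {st : Set ℝ} {u v : ℝ → Fin d → ℝ} (hu : ContinuousOn u st)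
    (hv : ContinuousOn v st) : ContinuousOn (fun τ => u τ ⬝ᵥ v τ) st := by
  simp only [dotProduct]
  exact continuousOn_finset_sum _ fun m _ =>
    (((continuous_apply m).comp_continuousOn hu).mul ((continuous_apply m).comp_continuousOn hv))

lemma hasDerivAt_dot {u v : ℝ → Fin d → ℝ} {u' v' : Fin d → ℝ} {τ : ℝ}
    (hu : HasDerivAt u u' τ) (hv : HasDerivAt v v' τ) :
    HasDerivAt (fun t => u t ⬝ᵥ v t) (u' ⬝ᵥ v τ + u τ ⬝ᵥ v') τ := by
  have h := HasDerivAt.fun_sum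
    (fun (m : Fin d) (_ : m ∈ Finset.univ) => ((hasDerivAt_pi.1 hu m).mul (hasDerivAt_pi.1 hv m)))
  simp only [dotProduct]
  exact h.congr_deriv Finset.sum_add_distrib

lemma continuous_mulVec (A : Matrix (Fin d) (Fin d) ℝ) {u : ℝ → Fin d → ℝ} (hu : Continuous u) :
    Continuous fun τ => A.mulVec (u τ) := (mulVecCLM A).continuous.comp hu

lemma continuousOn_mulVec (A : Matrix (Fin d) (Fin d) ℝ) {st : Set ℝ} {u : ℝ → Fin d → ℝ}
    (hu : ContinuousOn u st) : ContinuousOn (fun τ => A.mulVec (u τ)) st :=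
  (mulVecCLM A).continuous.comp_continuousOn hu

lemma hasDerivAt_mulVec (A : Matrix (Fin d) (Fin d) ℝ) {u : ℝ → Fin d → ℝ} {u' : Fin d → ℝ}
    {τ : ℝ} (hu : HasDerivAt u u' τ) :
    HasDerivAt (fun t => A.mulVec (u t)) (A.mulVec u') τ :=
  (mulVecCLM A).hasFDerivAt.comp_hasDerivAt τ hu

end dotlem

section intdot
variable {s d : ℕ} (c : Fin s → ℝ)

lemma wavg_mulVec (i : Fin s) (A : Matrix (Fin d) (Fin d) ℝ) {u : ℝ → Fin d → ℝ}
    (hu : ContinuousOn u (Set.Icc 0 1)) :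
    wavg c i (fun τ => A.mulVec (u τ)) = A.mulVec (wavg c i u) := by
  unfold wavg
  rw [Matrix.mulVec_smul]
  congr 1
  have : ∀ τ : ℝ, lag c i τ • A.mulVec (u τ) = mulVecCLM A (lag c i τ • u τ) := by
    intro τ
    rw [map_smul, mulVecCLM_apply]
  rw [intervalIntegral.integral_congr (g := fun τ => mulVecCLM A (lag c i τ • u τ))
    (fun τ _ => this τ)]
  rw [ContinuousLinearMap.intervalIntegral_comp_comm _ (lag_smul_intervalIntegrable c i hu)]
  rfl

lemma integral_lag_dot (i : Fin s) (hb : bw c i ≠ 0) {u : ℝ → Fin d → ℝ}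
    (hu : ContinuousOn u (Set.Icc 0 1)) (g : Fin d → ℝ) :
    ∫ τ in (0:ℝ)..1, lag c i τ * (g ⬝ᵥ u τ) = bw c i * (g ⬝ᵥ wavg c i u) := by
  have : ∀ τ : ℝ, lag c i τ * (g ⬝ᵥ u τ) = dotCLM g (lag c i τ • u τ) := by
    intro τ
    rw [dotCLM_apply, dotProduct_smul, smul_eq_mul]
  rw [intervalIntegral.integral_congr (g := fun τ => dotCLM g (lag c i τ • u τ))
    (fun τ _ => this τ)]
  rw [ContinuousLinearMap.intervalIntegral_comp_comm _ (lag_smul_intervalIntegrable c i hu)]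
  rw [integral_lag_smul c i hb, map_smul, dotCLM_apply, smul_eq_mul]

end intdot

section curve
variable {s d : ℕ} (c : Fin s → ℝ)

lemma pcurve_hasDerivAt (z0 : Fin d → ℝ) (Δt : ℝ) (F : Fin s → Fin d → ℝ) (τ : ℝ) :
    HasDerivAt (fun t => z0 + Δt • ∑ i, Lint c i t • F i) (Δt • ∑ i, lag c i τ • F i) τ :=
  ((HasDerivAt.fun_sum fun i _ => (Lint_hasDerivAt c i τ).smul_const (F i)).const_smul Δt).const_add z0

lemma pcurve_continuous (z0 : Fin d → ℝ) (Δt : ℝ) (F : Fin s → Fin d → ℝ) :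
    Continuous (fun t => z0 + Δt • ∑ i, Lint c i t • F i) :=
  continuous_const.add ((continuous_finset_sum _ fun i _ =>
    (Lint_continuous c i).smul continuous_const).const_smul Δt)

lemma pcurve'_continuous (Δt : ℝ) (F : Fin s → Fin d → ℝ) :
    Continuous (fun τ => Δt • ∑ i, lag c i τ • F i) :=
  (continuous_finset_sum _ fun i _ =>
    (lag_continuous c i).smul continuous_const).const_smul Δt

lemma LI (hc : Function.Injective c) (v : Fin s → Fin d → ℝ)
    (h : ∀ τ ∈ Set.Icc (0:ℝ) 1, ∑ i, Lint c i τ • v i = 0) : ∀ i, v i = 0 := by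
  intro i
  funext m
  set p : Polynomial ℝ := ∑ i', Polynomial.C (v i' m) * Lagrange.basis Finset.univ c i' with hp
  have hpe : ∀ t : ℝ, p.eval t = ∑ i', v i' m * lag c i' t := by
    intro t
    rw [hp, Polynomial.eval_finset_sum]
    exact Finset.sum_congr rfl fun i' _ => by rw [Polynomial.eval_mul, Polynomial.eval_C]; rfl
  have hroot : ∀ τ ∈ Set.Ioo (0:ℝ) 1, p.eval τ = 0 := by
    intro τ hτ
    have hq : HasDerivAt (fun t => ∑ i', Lint c i' t * v i' m)
        (∑ i', lag c i' τ * v i' m) τ :=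
      HasDerivAt.fun_sum fun i' _ => (Lint_hasDerivAt c i' τ).mul_const (v i' m)
    have h0 : (fun t => ∑ i', Lint c i' t * v i' m) =ᶠ[nhds τ] fun _ => (0:ℝ) := by
      filter_upwards [Icc_mem_nhds hτ.1 hτ.2] with t ht
      have h2 := congrFun (h t ht) m
      simpa [Finset.sum_apply, Pi.smul_apply, smul_eq_mul] using h2
    have hq0 : HasDerivAt (fun t => ∑ i', Lint c i' t * v i' m) 0 τ :=
      (hasDerivAt_const τ (0:ℝ)).congr_of_eventuallyEq h0
    have h3 := hq.unique hq0
    rw [hpe]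
    rw [show (∑ i', v i' m * lag c i' τ) = ∑ i', lag c i' τ * v i' m from
      Finset.sum_congr rfl fun i' _ => mul_comm _ _]
    exact h3
  have hpz : p = 0 := by
    apply p.eq_zero_of_infinite_isRoot
    apply Set.Infinite.mono (s := Set.Ioo (0:ℝ) 1)
    · intro x hx
      exact hroot x hx
    · exact Set.infinite_coe_iff.mp (Set.Ioo.infinite zero_lt_one)
  have heval : p.eval (c i) = v i m := by
    rw [hpe]
    rw [Finset.sum_eq_single i]
    · rw [show lag c i (c i) = 1 from Lagrange.eval_basis_self (hc.injOn) (Finset.mem_univ i),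
        mul_one]
    · intro i' _ hne
      rw [show lag c i' (c i) = 0 from Lagrange.eval_basis_of_ne hne (Finset.mem_univ i),
        mul_zero]
    · intro hni
      exact absurd (Finset.mem_univ i) hni
  rw [← heval, hpz]
  simp

section cell
open Matrix
variable {s d : ℕ}

lemma dotProduct_finsum {d : ℕ} (u : Fin d → ℝ) {ι : Type*} (st : Finset ι) (v : ι → Fin d → ℝ) :
    u ⬝ᵥ (∑ i ∈ st, v i) = ∑ i ∈ st, u ⬝ᵥ v i := by
  simp only [dotProduct, Finset.sum_apply, Finset.mul_sum]
  rw [Finset.sum_comm]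

lemma integral_dot_pderiv (c : Fin s → ℝ) (hb : ∀ i, bw c i ≠ 0) {u : ℝ → Fin d → ℝ}
    (hu : ContinuousOn u (Set.Icc 0 1)) (Δt : ℝ) (G : Fin s → Fin d → ℝ) :
    ∫ τ in (0:ℝ)..1, (u τ ⬝ᵥ (Δt • ∑ i, lag c i τ • G i))
      = Δt * ∑ i, bw c i * (wavg c i u ⬝ᵥ G i) := by
  have hpt : ∀ τ, u τ ⬝ᵥ (Δt • ∑ i, lag c i τ • G i)
      = Δt * ∑ i, lag c i τ * (G i ⬝ᵥ u τ) := by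
    intro τ
    rw [dotProduct_smul, smul_eq_mul]
    congr 1
    rw [dotProduct_finsum]
    exact Finset.sum_congr rfl fun i _ => by
      rw [dotProduct_smul, smul_eq_mul, dotProduct_comm]
  rw [intervalIntegral.integral_congr (g := fun τ => Δt * ∑ i, lag c i τ * (G i ⬝ᵥ u τ))
    (fun τ _ => hpt τ)]
  rw [intervalIntegral.integral_const_mul]
  congr 1
  have hii : ∀ i : Fin s, IntervalIntegrable (fun τ => lag c i τ * (G i ⬝ᵥ u τ))
      MeasureTheory.volume 0 1 := by
    intro i
    apply ContinuousOn.intervalIntegrable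
    rw [uIcc01]
    exact ((lag_continuous c i).continuousOn).mul (continuousOn_dot continuousOn_const hu)
  rw [intervalIntegral.integral_finset_sum (fun i _ => hii i)]
  refine Finset.sum_congr rfl fun i _ => ?_
  rw [integral_lag_dot c i (hb i) hu (G i), dotProduct_comm]

lemma cell_energy (c : Fin s → ℝ) (hb : ∀ i, bw c i ≠ 0)
    (M K : Matrix (Fin d) (Fin d) ℝ) (hM : Mᵀ = -M) (hK : Kᵀ = -K)
    (S : (Fin d → ℝ) → ℝ → ℝ) (gradS : (Fin d → ℝ) → ℝ → (Fin d → ℝ))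
    (hS : ∀ (x : ℝ) (w : Fin d → ℝ), HasFDerivAt (fun w' => S w' x) (dotCLM (gradS w x)) w)
    (hSc : ∀ x : ℝ, Continuous fun w => gradS w x)
    (Δt : ℝ) (xx : ℝ) (z zt zx ztx : ℝ → Fin d → ℝ)
    (hztc : ContinuousOn zt (Set.Icc 0 1)) (hzxc : ContinuousOn zx (Set.Icc 0 1))
    (hztxc : ContinuousOn ztx (Set.Icc 0 1))
    (hz1 : ∀ τ ∈ Set.Icc (0:ℝ) 1, z τ = z 0 + Δt • ∫ σ in (0:ℝ)..1, Acrk c τ σ • zt σ)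
    (hz3 : ∀ τ ∈ Set.Icc (0:ℝ) 1, zx τ = zx 0 + Δt • ∫ σ in (0:ℝ)..1, Acrk c τ σ • ztx σ)
    (h7 : ∀ τ ∈ Set.Icc (0:ℝ) 1, M.mulVec (zt τ) + K.mulVec (zx τ) = gradS (z τ) xx) :
    (S (z 1) xx - 1/2 * (z 1 ⬝ᵥ K.mulVec (zx 1)))
      - (S (z 0) xx - 1/2 * (z 0 ⬝ᵥ K.mulVec (zx 0)))
    = Δt / 2 * ∑ i, bw c i *
        ((wavg c i zt) ⬝ᵥ K.mulVec (wavg c i zx) - (wavg c i z) ⬝ᵥ K.mulVec (wavg c i ztx)) := by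
  have h0m : (0:ℝ) ∈ Set.Icc (0:ℝ) 1 := Set.left_mem_Icc.2 zero_le_one
  have h1m : (1:ℝ) ∈ Set.Icc (0:ℝ) 1 := Set.right_mem_Icc.2 zero_le_one
  set F : Fin s → Fin d → ℝ := fun i => wavg c i zt with hF
  set Hh : Fin s → Fin d → ℝ := fun i => wavg c i ztx with hHh
  set φ : ℝ → Fin d → ℝ := fun t => z 0 + Δt • ∑ i, Lint c i t • F i with hφdef
  set ψ : ℝ → Fin d → ℝ := fun t => zx 0 + Δt • ∑ i, Lint c i t • Hh i with hψdef
  have hzφ : ∀ τ ∈ Set.Icc (0:ℝ) 1, z τ = φ τ := by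
    intro τ hτ
    rw [hz1 τ hτ, hφdef, integral_Acrk c hb hztc τ]
  have hzxψ : ∀ τ ∈ Set.Icc (0:ℝ) 1, zx τ = ψ τ := by
    intro τ hτ
    rw [hz3 τ hτ, hψdef, integral_Acrk c hb hztxc τ]
  have hφc : Continuous φ := pcurve_continuous c _ _ _
  have hψc : Continuous ψ := pcurve_continuous c _ _ _
  have hφd : ∀ τ, HasDerivAt φ (Δt • ∑ i, lag c i τ • F i) τ := fun τ =>
    pcurve_hasDerivAt c _ _ _ τ
  have hψd : ∀ τ, HasDerivAt ψ (Δt • ∑ i, lag c i τ • Hh i) τ := fun τ =>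
    pcurve_hasDerivAt c _ _ _ τ
  have hφ'c : Continuous fun τ => Δt • ∑ i, lag c i τ • F i := pcurve'_continuous c _ _
  have hψ'c : Continuous fun τ => Δt • ∑ i, lag c i τ • Hh i := pcurve'_continuous c _ _
  -- wavg identifications
  have hwz : ∀ i, wavg c i z = wavg c i φ := fun i => wavg_congr c i hzφ
  have hwzx : ∀ i, wavg c i zx = wavg c i ψ := fun i => wavg_congr c i hzxψ
  -- S part
  have hSder : ∀ τ : ℝ, HasDerivAt (fun t => S (φ t) xx)
      (gradS (φ τ) xx ⬝ᵥ (Δt • ∑ i, lag c i τ • F i)) τ := by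
    intro τ
    have h := (hS xx (φ τ)).comp_hasDerivAt τ (hφd τ)
    rwa [dotCLM_apply] at h
  have hSint : ∫ τ in (0:ℝ)..1, gradS (φ τ) xx ⬝ᵥ (Δt • ∑ i, lag c i τ • F i)
      = S (φ 1) xx - S (φ 0) xx := by
    exact intervalIntegral.integral_eq_sub_of_hasDerivAt (fun τ _ => hSder τ)
      ((continuous_dot ((hSc xx).comp hφc) hφ'c).intervalIntegrable _ _)
  -- rewrite the S integrand on the interval
  have hSint2 : ∫ τ in (0:ℝ)..1, gradS (φ τ) xx ⬝ᵥ (Δt • ∑ i, lag c i τ • F i)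
      = (∫ τ in (0:ℝ)..1, (fun t => M.mulVec (zt t)) τ ⬝ᵥ (Δt • ∑ i, lag c i τ • F i))
        + ∫ τ in (0:ℝ)..1, (fun t => K.mulVec (ψ t)) τ ⬝ᵥ (Δt • ∑ i, lag c i τ • F i) := by
    rw [← intervalIntegral.integral_add]
    · apply intervalIntegral.integral_congr
      intro τ hτ
      rw [uIcc01] at hτ
      beta_reduce
      have e1 : gradS (φ τ) xx = M.mulVec (zt τ) + K.mulVec (ψ τ) := by
        rw [← hzφ τ hτ, ← h7 τ hτ, hzxψ τ hτ]
      rw [e1, add_dotProduct]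
    · apply ContinuousOn.intervalIntegrable
      rw [uIcc01]
      exact continuousOn_dot (continuousOn_mulVec M hztc) hφ'c.continuousOn
    · apply Continuous.intervalIntegrable
      exact continuous_dot (continuous_mulVec K hψc) hφ'c
  have hI1 : ∫ τ in (0:ℝ)..1, (fun t => M.mulVec (zt t)) τ ⬝ᵥ (Δt • ∑ i, lag c i τ • F i)
      = 0 := by
    rw [integral_dot_pderiv c hb (continuousOn_mulVec M hztc) Δt F]
    have : ∀ i : Fin s, bw c i * (wavg c i (fun t => M.mulVec (zt t)) ⬝ᵥ F i) = 0 := by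
      intro i
      rw [wavg_mulVec c i M hztc, dotProduct_comm, skew_dot_self hM, mul_zero]
    rw [Finset.sum_congr rfl fun i _ => this i]
    simp
  have hI2 : ∫ τ in (0:ℝ)..1, (fun t => K.mulVec (ψ t)) τ ⬝ᵥ (Δt • ∑ i, lag c i τ • F i)
      = Δt * ∑ i, bw c i * (K.mulVec (wavg c i zx) ⬝ᵥ F i) := by
    rw [integral_dot_pderiv c hb (continuousOn_mulVec K hψc.continuousOn) Δt F]
    congr 1
    refine Finset.sum_congr rfl fun i _ => ?_
    rw [wavg_mulVec c i K hψc.continuousOn, hwzx i]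
  -- quadratic part
  have hqder : ∀ τ : ℝ, HasDerivAt (fun t => φ t ⬝ᵥ K.mulVec (ψ t))
      ((Δt • ∑ i, lag c i τ • F i) ⬝ᵥ K.mulVec (ψ τ)
        + φ τ ⬝ᵥ K.mulVec (Δt • ∑ i, lag c i τ • Hh i)) τ := fun τ =>
    hasDerivAt_dot (hφd τ) (hasDerivAt_mulVec K (hψd τ))
  have hqint : ∫ τ in (0:ℝ)..1, ((Δt • ∑ i, lag c i τ • F i) ⬝ᵥ K.mulVec (ψ τ)
        + φ τ ⬝ᵥ K.mulVec (Δt • ∑ i, lag c i τ • Hh i))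
      = φ 1 ⬝ᵥ K.mulVec (ψ 1) - φ 0 ⬝ᵥ K.mulVec (ψ 0) := by
    exact intervalIntegral.integral_eq_sub_of_hasDerivAt (fun τ _ => hqder τ)
      (((continuous_dot hφ'c (continuous_mulVec K hψc)).add
        (continuous_dot hφc (continuous_mulVec K hψ'c))).intervalIntegrable _ _)
  have hqsplit : ∫ τ in (0:ℝ)..1, ((Δt • ∑ i, lag c i τ • F i) ⬝ᵥ K.mulVec (ψ τ)
        + φ τ ⬝ᵥ K.mulVec (Δt • ∑ i, lag c i τ • Hh i))
      = (∫ τ in (0:ℝ)..1, (Δt • ∑ i, lag c i τ • F i) ⬝ᵥ K.mulVec (ψ τ))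
        + ∫ τ in (0:ℝ)..1, φ τ ⬝ᵥ K.mulVec (Δt • ∑ i, lag c i τ • Hh i) := by
    apply intervalIntegral.integral_add
    · exact (continuous_dot hφ'c (continuous_mulVec K hψc)).intervalIntegrable _ _
    · exact (continuous_dot hφc (continuous_mulVec K hψ'c)).intervalIntegrable _ _
  have hI3 : ∫ τ in (0:ℝ)..1, (Δt • ∑ i, lag c i τ • F i) ⬝ᵥ K.mulVec (ψ τ)
      = Δt * ∑ i, bw c i * (K.mulVec (wavg c i zx) ⬝ᵥ F i) := by
    have : ∀ τ : ℝ, (Δt • ∑ i, lag c i τ • F i) ⬝ᵥ K.mulVec (ψ τ)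
        = (fun t => K.mulVec (ψ t)) τ ⬝ᵥ (Δt • ∑ i, lag c i τ • F i) := fun τ =>
      dotProduct_comm _ _
    rw [intervalIntegral.integral_congr (fun τ _ => this τ)]
    exact hI2
  have hI4 : ∫ τ in (0:ℝ)..1, φ τ ⬝ᵥ K.mulVec (Δt • ∑ i, lag c i τ • Hh i)
      = Δt * ∑ i, bw c i * (wavg c i z ⬝ᵥ K.mulVec (Hh i)) := by
    have hpt : ∀ τ : ℝ, φ τ ⬝ᵥ K.mulVec (Δt • ∑ i, lag c i τ • Hh i)
        = φ τ ⬝ᵥ (Δt • ∑ i, lag c i τ • K.mulVec (Hh i)) := by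
      intro τ
      congr 1
      rw [Matrix.mulVec_smul]
      congr 1
      rw [show (K.mulVec (∑ i, lag c i τ • Hh i)) = mulVecCLM K (∑ i, lag c i τ • Hh i) from rfl,
        map_sum]
      exact Finset.sum_congr rfl fun i _ => by rw [_root_.map_smul, mulVecCLM_apply]
    rw [intervalIntegral.integral_congr (fun τ _ => hpt τ)]
    rw [integral_dot_pderiv c hb hφc.continuousOn Δt (fun i => K.mulVec (Hh i))]
    congr 1
    refine Finset.sum_congr rfl fun i _ => ?_
    rw [hwz i]
  -- endpoint identifications
  have e0 : z 0 = φ 0 := hzφ 0 h0m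
  have e1 : z 1 = φ 1 := hzφ 1 h1m
  have f0 : zx 0 = ψ 0 := hzxψ 0 h0m
  have f1 : zx 1 = ψ 1 := hzxψ 1 h1m
  rw [e0, e1, f0, f1]
  have hq : φ 1 ⬝ᵥ K.mulVec (ψ 1) - φ 0 ⬝ᵥ K.mulVec (ψ 0)
      = Δt * ∑ i, bw c i * (K.mulVec (wavg c i zx) ⬝ᵥ F i)
        + Δt * ∑ i, bw c i * (wavg c i z ⬝ᵥ K.mulVec (Hh i)) := by
    rw [← hI3, ← hI4, ← hqsplit, hqint]
  have hs : S (φ 1) xx - S (φ 0) xx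
      = Δt * ∑ i, bw c i * (K.mulVec (wavg c i zx) ⬝ᵥ F i) := by
    rw [← hSint, hSint2, hI1, hI2, zero_add]
  have goal2 : S (φ 1) xx - 1/2 * (φ 1 ⬝ᵥ K.mulVec (ψ 1))
      - (S (φ 0) xx - 1/2 * (φ 0 ⬝ᵥ K.mulVec (ψ 0)))
      = (S (φ 1) xx - S (φ 0) xx)
        - 1/2 * (φ 1 ⬝ᵥ K.mulVec (ψ 1) - φ 0 ⬝ᵥ K.mulVec (ψ 0)) := by ring
  have hRHS : ∑ i, bw c i *
        ((wavg c i zt) ⬝ᵥ K.mulVec (wavg c i zx) - (wavg c i z) ⬝ᵥ K.mulVec (wavg c i ztx))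
      = (∑ i, bw c i * (K.mulVec (wavg c i zx) ⬝ᵥ F i))
        - ∑ i, bw c i * (wavg c i z ⬝ᵥ K.mulVec (Hh i)) := by
    rw [← Finset.sum_sub_distrib]
    refine Finset.sum_congr rfl fun i _ => ?_
    have e : (wavg c i zt) ⬝ᵥ K.mulVec (wavg c i zx) = K.mulVec (wavg c i zx) ⬝ᵥ F i :=
      dotProduct_comm _ _
    have e2 : (wavg c i z) ⬝ᵥ K.mulVec (wavg c i ztx) = wavg c i z ⬝ᵥ K.mulVec (Hh i) := rfl
    rw [e, e2, mul_sub]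
  rw [goal2, hs, hq, hRHS]
  ring

section alg
open Matrix
variable {d : ℕ}

lemma finsum_dotProduct {ι : Type*} (st : Finset ι) (v : ι → Fin d → ℝ) (u : Fin d → ℝ) :
    (∑ i ∈ st, v i) ⬝ᵥ u = ∑ i ∈ st, v i ⬝ᵥ u := by
  simp only [dotProduct, Finset.sum_apply, Finset.sum_mul]
  rw [Finset.sum_comm]

lemma cellalg {r' : ℕ} (K : Matrix (Fin d) (Fin d) ℝ) (hK : Kᵀ = -K)
    (bt : Fin r' → ℝ) (a : Matrix (Fin r') (Fin r') ℝ)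
    (hsymp : ∀ j k, bt j * bt k - bt j * a j k - bt k * a k j = 0)
    (Δx : ℝ)
    (F G Hh P : Fin r' → Fin d → ℝ) (Q Q' W W' : Fin d → ℝ)
    (hP : ∀ j, P j = Q + Δx • ∑ k, a j k • G k)
    (hF : ∀ j, F j = W + Δx • ∑ k, a j k • Hh k)
    (hQ' : Q' = Q + Δx • ∑ j, bt j • G j)
    (hW' : W' = W + Δx • ∑ j, bt j • Hh j) :
    Δx * ∑ j, bt j * (F j ⬝ᵥ K.mulVec (G j) - P j ⬝ᵥ K.mulVec (Hh j))
      = W' ⬝ᵥ K.mulVec Q' - W ⬝ᵥ K.mulVec Q := by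
  set dk : (Fin d → ℝ) → (Fin d → ℝ) → ℝ := fun u v => u ⬝ᵥ K.mulVec v with hdk
  have dk_skew : ∀ u v, dk u v = -dk v u := fun u v => skew_dot hK u v
  have dk_add_l : ∀ u v w, dk (u + v) w = dk u w + dk v w := fun u v w =>
    add_dotProduct _ _ _
  have dk_smul_l : ∀ (t : ℝ) u v, dk (t • u) v = t * dk u v := fun t u v => by
    rw [hdk]; exact smul_dotProduct _ _ _
  have dk_sum_l : ∀ {ι : Type} (st : Finset ι) (m : ι → Fin d → ℝ) (u),
      dk (∑ k ∈ st, m k) u = ∑ k ∈ st, dk (m k) u := fun st m u =>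
    finsum_dotProduct st m _
  have hmv_add : ∀ u v, K.mulVec (u + v) = K.mulVec u + K.mulVec v := fun u v =>
    Matrix.mulVec_add _ _ _
  have hmv_smul : ∀ (t : ℝ) u, K.mulVec (t • u) = t • K.mulVec u := fun t u =>
    Matrix.mulVec_smul _ _ _
  have hmv_sum : ∀ {ι : Type} (st : Finset ι) (m : ι → Fin d → ℝ),
      K.mulVec (∑ k ∈ st, m k) = ∑ k ∈ st, K.mulVec (m k) := by
    intro ι st m
    rw [show K.mulVec (∑ k ∈ st, m k) = mulVecCLM K (∑ k ∈ st, m k) from rfl, map_sum]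
    rfl
  have dk_add_r : ∀ u v w, dk u (v + w) = dk u v + dk u w := fun u v w => by
    rw [hdk]
    simp only []
    rw [hmv_add, dotProduct_add]
  have dk_smul_r : ∀ (t : ℝ) u v, dk u (t • v) = t * dk u v := fun t u v => by
    rw [hdk]
    simp only []
    rw [hmv_smul, dotProduct_smul, smul_eq_mul]
  have dk_sum_r : ∀ {ι : Type} (st : Finset ι) (u) (m : ι → Fin d → ℝ),
      dk u (∑ k ∈ st, m k) = ∑ k ∈ st, dk u (m k) := by
    intro ι st u m
    rw [hdk]
    simp only []
    rw [hmv_sum, dotProduct_finsum]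
  set Γ : Fin d → ℝ := ∑ j, bt j • G j with hΓdef
  set Λ : Fin d → ℝ := ∑ j, bt j • Hh j with hΛdef
  -- expansions
  have e1 : ∀ j, dk (F j) (G j) = dk W (G j) + Δx * ∑ k, a j k * dk (Hh k) (G j) := by
    intro j
    rw [hF j, dk_add_l, dk_smul_l, dk_sum_l]
    congr 2
    exact Finset.sum_congr rfl fun k _ => dk_smul_l _ _ _
  have e2 : ∀ j, dk (P j) (Hh j) = dk Q (Hh j) + Δx * ∑ k, a j k * dk (G k) (Hh j) := by
    intro j
    rw [hP j, dk_add_l, dk_smul_l, dk_sum_l]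
    congr 2
    exact Finset.sum_congr rfl fun k _ => dk_smul_l _ _ _
  have perj : ∀ j, bt j * (dk (F j) (G j) - dk (P j) (Hh j))
      = bt j * dk W (G j) - bt j * dk Q (Hh j)
        + Δx * ∑ k, (bt j * a j k) * dk (Hh k) (G j)
        - Δx * ∑ k, (bt j * a j k) * dk (G k) (Hh j) := by
    intro j
    have t1 : ∑ k, (bt j * a j k) * dk (Hh k) (G j)
        = bt j * ∑ k, a j k * dk (Hh k) (G j) := by
      rw [Finset.mul_sum]
      exact Finset.sum_congr rfl fun k _ => by ring
    have t2 : ∑ k, (bt j * a j k) * dk (G k) (Hh j)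
        = bt j * ∑ k, a j k * dk (G k) (Hh j) := by
      rw [Finset.mul_sum]
      exact Finset.sum_congr rfl fun k _ => by ring
    rw [e1 j, e2 j, t1, t2]
    ring
  have swap2 : ∑ j, ∑ k, (bt j * a j k) * dk (G k) (Hh j)
      = ∑ j, ∑ k, (bt k * a k j) * (-dk (Hh k) (G j)) := by
    rw [Finset.sum_comm]
    refine Finset.sum_congr rfl fun j _ => Finset.sum_congr rfl fun k _ => ?_
    rw [← dk_skew]
  have cross : ∑ j, ∑ k, (bt j * a j k) * dk (Hh k) (G j)
        - ∑ j, ∑ k, (bt j * a j k) * dk (G k) (Hh j)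
      = dk Λ Γ := by
    rw [swap2, ← Finset.sum_sub_distrib]
    have : ∀ j ∈ Finset.univ, (∑ k, (bt j * a j k) * dk (Hh k) (G j)
          - ∑ k, (bt k * a k j) * (-dk (Hh k) (G j)))
        = ∑ k, (bt j * bt k) * dk (Hh k) (G j) := by
      intro j _
      rw [← Finset.sum_sub_distrib]
      refine Finset.sum_congr rfl fun k _ => ?_
      have hs := hsymp j k
      linear_combination (-(dk (Hh k) (G j))) * hs
    rw [Finset.sum_congr rfl this]
    rw [hΛdef, hΓdef, dk_sum_l]
    rw [Finset.sum_comm]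
    refine Finset.sum_congr rfl fun j _ => ?_
    rw [dk_smul_l, dk_sum_r, Finset.mul_sum]
    refine Finset.sum_congr rfl fun k _ => ?_
    rw [dk_smul_r]
    ring
  have main : ∑ j, bt j * (dk (F j) (G j) - dk (P j) (Hh j))
      = dk W Γ - dk Q Λ + Δx * dk Λ Γ := by
    rw [Finset.sum_congr rfl fun j _ => perj j]
    rw [Finset.sum_sub_distrib, Finset.sum_add_distrib, Finset.sum_sub_distrib]
    have s1 : ∑ j, bt j * dk W (G j) = dk W Γ := by
      rw [hΓdef, dk_sum_r]
      exact Finset.sum_congr rfl fun j _ => (dk_smul_r _ _ _).symm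
    have s2 : ∑ j, bt j * dk Q (Hh j) = dk Q Λ := by
      rw [hΛdef, dk_sum_r]
      exact Finset.sum_congr rfl fun j _ => (dk_smul_r _ _ _).symm
    have s3 : ∑ j, Δx * ∑ k, (bt j * a j k) * dk (Hh k) (G j)
        = Δx * ∑ j, ∑ k, (bt j * a j k) * dk (Hh k) (G j) := by
      rw [Finset.mul_sum]
    have s4 : ∑ j, Δx * ∑ k, (bt j * a j k) * dk (G k) (Hh j)
        = Δx * ∑ j, ∑ k, (bt j * a j k) * dk (G k) (Hh j) := by
      rw [Finset.mul_sum]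
    rw [s1, s2, s3, s4]
    have : Δx * ∑ j, ∑ k, (bt j * a j k) * dk (Hh k) (G j)
        - Δx * ∑ j, ∑ k, (bt j * a j k) * dk (G k) (Hh j) = Δx * dk Λ Γ := by
      rw [← mul_sub, cross]
    linarith [this]
  rw [main]
  -- final telescoping algebra
  have hΓ : Δx • Γ = Q' - Q := by rw [hQ', add_sub_cancel_left]
  have hΛ : Δx • Λ = W' - W := by rw [hW', add_sub_cancel_left]
  have dk_sub_l : ∀ u v w, dk (u - v) w = dk u w - dk v w := fun u v w =>
    sub_dotProduct _ _ _
  have dk_sub_r : ∀ u v w, dk u (v - w) = dk u v - dk u w := fun u v w => by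
    rw [hdk]
    simp only []
    rw [show K.mulVec (v - w) = mulVecCLM K (v - w) from rfl, map_sub]
    rw [dotProduct_sub]
    rfl
  have a1 : Δx * dk W Γ = dk W Q' - dk W Q := by rw [← dk_smul_r, hΓ, dk_sub_r]
  have a2 : Δx * dk Q Λ = dk Q W' - dk Q W := by rw [← dk_smul_r, hΛ, dk_sub_r]
  have a3 : Δx * (Δx * dk Λ Γ) = dk W' Q' - dk W' Q - dk W Q' + dk W Q := by
    rw [← dk_smul_r, ← dk_smul_l, hΛ, hΓ, dk_sub_l, dk_sub_r, dk_sub_r]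
    ring
  have sk1 : dk Q W' = -dk W' Q := dk_skew _ _
  have sk2 : dk Q W = -dk W Q := dk_skew _ _
  have expand : Δx * (dk W Γ - dk Q Λ + Δx * dk Λ Γ)
      = Δx * dk W Γ - Δx * dk Q Λ + Δx * (Δx * dk Λ Γ) := by ring
  rw [expand, a1, a2, a3]
  rw [sk1, sk2]
  ring
end alg

section glue
variable {s d : ℕ} (c : Fin s → ℝ)

lemma wavg_affine {r' : ℕ} (i : Fin s) {f g : ℝ → Fin d → ℝ} {B : Fin r' → ℝ → Fin d → ℝ}
    {Δx : ℝ} {coef : Fin r' → ℝ}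
    (hg : ContinuousOn g (Set.Icc 0 1)) (hB : ∀ k, ContinuousOn (B k) (Set.Icc 0 1))
    (hfg : ∀ τ ∈ Set.Icc (0:ℝ) 1, f τ = g τ + Δx • ∑ k, coef k • B k τ) :
    wavg c i f = wavg c i g + Δx • ∑ k, coef k • wavg c i (B k) := by
  rw [wavg_congr c i hfg]
  have hpt : ∀ τ : ℝ, lag c i τ • (g τ + Δx • ∑ k, coef k • B k τ)
      = lag c i τ • g τ + ∑ k, (Δx * coef k) • (lag c i τ • B k τ) := by
    intro τ
    rw [smul_add]
    congr 1
    rw [smul_smul, Finset.smul_sum]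
    refine Finset.sum_congr rfl fun k _ => ?_
    simp only [smul_smul]
    congr 1
    ring
  have hIc : (∫ τ in (0:ℝ)..1, lag c i τ • (g τ + Δx • ∑ k, coef k • B k τ))
      = ∫ τ in (0:ℝ)..1, (lag c i τ • g τ + ∑ k, (Δx * coef k) • (lag c i τ • B k τ)) :=
    intervalIntegral.integral_congr (fun τ _ => hpt τ)
  show (1 / bw c i) • (∫ τ in (0:ℝ)..1, lag c i τ • (g τ + Δx • ∑ k, coef k • B k τ)) = _
  rw [hIc]
  show _ = wavg c i g + Δx • ∑ k, coef k • wavg c i (B k)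
  unfold wavg
  have hint2 : ∀ k : Fin r', IntervalIntegrable
      (fun τ => (Δx * coef k) • (lag c i τ • B k τ)) MeasureTheory.volume 0 1 := by
    intro k
    apply ContinuousOn.intervalIntegrable
    rw [uIcc01]
    exact (((lag_continuous c i).continuousOn).smul (hB k)).const_smul (Δx * coef k)
  have hintsum : IntervalIntegrable (fun τ => ∑ k, (Δx * coef k) • (lag c i τ • B k τ))
      MeasureTheory.volume 0 1 := by
    apply ContinuousOn.intervalIntegrable
    rw [uIcc01]
    exact continuousOn_finset_sum _ fun k _ =>
      (((lag_continuous c i).continuousOn).smul (hB k)).const_smul (Δx * coef k)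
  rw [intervalIntegral.integral_add (lag_smul_intervalIntegrable c i hg) hintsum]
  rw [intervalIntegral.integral_finset_sum (fun k _ => hint2 k)]
  rw [smul_add]
  congr 1
  rw [Finset.smul_sum, Finset.smul_sum]
  refine Finset.sum_congr rfl fun k _ => ?_
  rw [intervalIntegral.integral_smul]
  simp only [smul_smul]
  congr 1
  ring

lemma smul_sum_swap {ι κ : Type*} (sι : Finset ι) (sκ : Finset κ)
    (p q : ℝ) (u : ι → ℝ) (v : κ → ℝ) (X : ι → κ → Fin d → ℝ) :
    p • ∑ k ∈ sκ, v k • (q • ∑ i ∈ sι, u i • X i k)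
      = q • ∑ i ∈ sι, u i • (p • ∑ k ∈ sκ, v k • X i k) := by
  simp only [Finset.smul_sum, smul_smul]
  rw [Finset.sum_comm]
  refine Finset.sum_congr rfl fun i _ => Finset.sum_congr rfl fun k _ => ?_
  congr 1
  ring

lemma combadd {r' : ℕ} (Δt Δx : ℝ) (L : Fin s → ℝ) (F : Fin s → Fin d → ℝ)
    (aj : Fin r' → ℝ) (Hh : Fin r' → Fin s → Fin d → ℝ) :
    (Δt • ∑ i, L i • F i) + Δx • ∑ k, aj k • (Δt • ∑ i, L i • Hh k i)
      = Δt • ∑ i, L i • (F i + Δx • ∑ k, aj k • Hh k i) := by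
  conv_rhs => rw [show (fun i => L i • (F i + Δx • ∑ k, aj k • Hh k i))
    = fun i => L i • F i + L i • (Δx • ∑ k, aj k • Hh k i) from funext fun i => smul_add _ _ _]
  rw [Finset.sum_add_distrib, smul_add]
  congr 1
  exact smul_sum_swap Finset.univ Finset.univ Δx Δt L aj (fun i k => Hh k i)

lemma combsub {r' : ℕ} (Δt Δx : ℝ) (L : Fin s → ℝ) (F : Fin s → Fin d → ℝ)
    (aj : Fin r' → ℝ) (Hh : Fin r' → Fin s → Fin d → ℝ) :
    (Δt • ∑ i, L i • F i) - Δx • ∑ k, aj k • (Δt • ∑ i, L i • Hh k i)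
      = Δt • ∑ i, L i • (F i - Δx • ∑ k, aj k • Hh k i) := by
  conv_rhs => rw [show (fun i => L i • (F i - Δx • ∑ k, aj k • Hh k i))
    = fun i => L i • F i - L i • (Δx • ∑ k, aj k • Hh k i) from funext fun i => smul_sub _ _ _]
  rw [Finset.sum_sub_distrib, smul_sub]
  congr 1
  exact smul_sum_swap Finset.univ Finset.univ Δx Δt L aj (fun i k => Hh k i)

lemma LI' (hc : Function.Injective c) {Δt : ℝ} (hΔt : Δt ≠ 0) (u v : Fin s → Fin d → ℝ)
    (h : ∀ τ ∈ Set.Icc (0:ℝ) 1,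
      Δt • ∑ i, Lint c i τ • u i = Δt • ∑ i, Lint c i τ • v i) :
    ∀ i, u i = v i := by
  have h2 := LI c hc (fun i => u i - v i) ?_
  · intro i
    exact sub_eq_zero.mp (h2 i)
  · intro τ hτ
    have h4 : ∑ i, Lint c i τ • u i = ∑ i, Lint c i τ • v i :=
      smul_right_injective (Fin d → ℝ) hΔt (h τ hτ)
    simp only [smul_sub, Finset.sum_sub_distrib]
    rw [h4, sub_self]

end glue

section rearr
lemma scalar_rearrange {r' s' : ℕ} (p q : ℝ) (bt : Fin r' → ℝ) (bw' : Fin s' → ℝ)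
    (X : Fin r' → Fin s' → ℝ) :
    p * ∑ j, bt j * (q * ∑ i, bw' i * X j i)
      = q * ∑ i, bw' i * (p * ∑ j, bt j * X j i) := by
  simp only [Finset.mul_sum]
  rw [Finset.sum_comm]
  exact Finset.sum_congr rfl fun i _ => Finset.sum_congr rfl fun j _ => by ring

lemma scalar_rearrange2 {n' s' : ℕ} (q : ℝ) (bw' : Fin s' → ℝ) (D : Fin n' → Fin s' → ℝ) :
    ∑ n, (q * ∑ i, bw' i * D n i) = q * ∑ i, bw' i * ∑ n, D n i := by
  simp only [Finset.mul_sum]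
  rw [Finset.sum_comm]
end rearr

theorem stmt14 {s d r N : ℕ} (hs : 1 ≤ s) (c : Fin s → ℝ) (hc : Function.Injective c)
    (hb : ∀ i, bw c i ≠ 0)
    (M K : Matrix (Fin d) (Fin d) ℝ) (hM : Mᵀ = -M) (hK : Kᵀ = -K)
    (S : (Fin d → ℝ) → ℝ → ℝ) (gradS : (Fin d → ℝ) → ℝ → (Fin d → ℝ))
    (hS : ∀ (x : ℝ) (w : Fin d → ℝ), HasFDerivAt (fun w' => S w' x) (dotCLM (gradS w x)) w)
    (hSc : ∀ x : ℝ, Continuous fun w => gradS w x)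
    (Δt Δx : ℝ) (hΔt : Δt ≠ 0) (hΔx : Δx ≠ 0)
    (x0 : ℝ) (ct bt : Fin r → ℝ) (a : Matrix (Fin r) (Fin r) ℝ) (ha : IsUnit a)
    (hsymp : ∀ j k, bt j * bt k - bt j * a j k - bt k * a k j = 0)
    (znode δtznode : Fin (N+1) → ℝ → (Fin d → ℝ))
    (z δtz δxz δtδxz δxδtz : Fin N → Fin r → ℝ → (Fin d → ℝ))
    (hznodec : ∀ n, ContinuousOn (znode n) (Set.Icc 0 1))
    (hδtznodec : ∀ n, ContinuousOn (δtznode n) (Set.Icc 0 1))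
    (hzc : ∀ n j, ContinuousOn (z n j) (Set.Icc 0 1))
    (hδtzc : ∀ n j, ContinuousOn (δtz n j) (Set.Icc 0 1))
    (hδxzc : ∀ n j, ContinuousOn (δxz n j) (Set.Icc 0 1))
    (hδtδxzc : ∀ n j, ContinuousOn (δtδxz n j) (Set.Icc 0 1))
    (hδxδtzc : ∀ n j, ContinuousOn (δxδtz n j) (Set.Icc 0 1))
    (h1 : ∀ n j, ∀ τ ∈ Set.Icc (0:ℝ) 1,
      z n j τ = z n j 0 + Δt • ∫ σ in (0:ℝ)..1, Acrk c τ σ • δtz n j σ)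
    (h2 : ∀ n j, ∀ τ ∈ Set.Icc (0:ℝ) 1,
      z n j τ = znode n.castSucc τ + Δx • ∑ k, a j k • δxz n k τ)
    (h3 : ∀ n j, ∀ τ ∈ Set.Icc (0:ℝ) 1,
      δxz n j τ = δxz n j 0 + Δt • ∫ σ in (0:ℝ)..1, Acrk c τ σ • δtδxz n j σ)
    (h4 : ∀ n j, ∀ τ ∈ Set.Icc (0:ℝ) 1,
      δtz n j τ = δtznode n.castSucc τ + Δx • ∑ k, a j k • δxδtz n k τ)
    (h5 : ∀ n, ∀ τ ∈ Set.Icc (0:ℝ) 1,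
      znode n.succ τ = znode n.castSucc τ + Δx • ∑ j, bt j • δxz n j τ)
    (h6 : ∀ n, ∀ τ ∈ Set.Icc (0:ℝ) 1,
      δtznode n.succ τ = δtznode n.castSucc τ + Δx • ∑ j, bt j • δxδtz n j τ)
    (h7 : ∀ n j, ∀ τ ∈ Set.Icc (0:ℝ) 1,
      M.mulVec (δtz n j τ) + K.mulVec (δxz n j τ)
        = gradS (z n j τ) (x0 + (n : ℕ) * Δx + ct j * Δx))
    (hper : znode (Fin.last N) = znode 0)
    (hper' : δtznode (Fin.last N) = δtznode 0)
    (E0 E1 : Fin N → Fin r → ℝ)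
    (hE0 : ∀ n j, E0 n j = S (z n j 0) (x0 + (n : ℕ) * Δx + ct j * Δx)
        - (1/2) * dotProduct (z n j 0) (K.mulVec (δxz n j 0)))
    (hE1 : ∀ n j, E1 n j = S (z n j 1) (x0 + (n : ℕ) * Δx + ct j * Δx)
        - (1/2) * dotProduct (z n j 1) (K.mulVec (δxz n j 1))) :
    Δx * ∑ n, ∑ j, bt j * E1 n j = Δx * ∑ n, ∑ j, bt j * E0 n j := by
  have h0m : (0:ℝ) ∈ Set.Icc (0:ℝ) 1 := Set.left_mem_Icc.2 zero_le_one
  rcases Nat.eq_zero_or_pos N with hN0 | hN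
  · subst hN0
    simp
  rcases Nat.eq_zero_or_pos r with hr0 | hr
  · subst hr0
    simp
  set F : Fin N → Fin r → Fin s → (Fin d → ℝ) := fun n j i => wavg c i (δtz n j) with hFdef
  set G : Fin N → Fin r → Fin s → (Fin d → ℝ) := fun n j i => wavg c i (δxz n j) with hGdef
  set Hh : Fin N → Fin r → Fin s → (Fin d → ℝ) := fun n j i => wavg c i (δtδxz n j) with hHdef
  set P : Fin N → Fin r → Fin s → (Fin d → ℝ) := fun n j i => wavg c i (z n j) with hPdef
  set Q : Fin (N+1) → Fin s → (Fin d → ℝ) := fun m i => wavg c i (znode m) with hQdef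
  have hz1' : ∀ n j, ∀ τ ∈ Set.Icc (0:ℝ) 1,
      z n j τ = z n j 0 + Δt • ∑ i, Lint c i τ • F n j i := by
    intro n j τ hτ
    rw [h1 n j τ hτ, integral_Acrk c hb (hδtzc n j) τ]
  have hzx' : ∀ n j, ∀ τ ∈ Set.Icc (0:ℝ) 1,
      δxz n j τ = δxz n j 0 + Δt • ∑ i, Lint c i τ • Hh n j i := by
    intro n j τ hτ
    rw [h3 n j τ hτ, integral_Acrk c hb (hδtδxzc n j) τ]
  have hE : ∀ n j, E1 n j - E0 n j = Δt / 2 * ∑ i, bw c i *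
      (F n j i ⬝ᵥ K.mulVec (G n j i) - P n j i ⬝ᵥ K.mulVec (Hh n j i)) := by
    intro n j
    rw [hE1 n j, hE0 n j]
    exact cell_energy c hb M K hM hK S gradS hS hSc Δt (x0 + (n:ℕ) * Δx + ct j * Δx)
      (z n j) (δtz n j) (δxz n j) (δtδxz n j) (hδtzc n j) (hδxzc n j) (hδtδxzc n j)
      (h1 n j) (h3 n j) (h7 n j)
  have hPrel : ∀ n j i, P n j i = Q n.castSucc i + Δx • ∑ k, a j k • G n k i := by
    intro n j i
    exact wavg_affine c i (hznodec n.castSucc) (fun k => hδxzc n k) (h2 n j)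
  have hQrel : ∀ (n : Fin N) i, Q n.succ i = Q n.castSucc i + Δx • ∑ j, bt j • G n j i := by
    intro n i
    exact wavg_affine c i (hznodec n.castSucc) (fun j => hδxzc n j) (h5 n)
  have hrep : ∀ (n : Fin N) (j : Fin r), ∀ τ ∈ Set.Icc (0:ℝ) 1,
      znode n.castSucc τ = znode n.castSucc 0
        + Δt • ∑ i, Lint c i τ • (F n j i - Δx • ∑ k, a j k • Hh n k i) := by
    intro n j τ hτ
    have e0 : znode n.castSucc τ = z n j τ - Δx • ∑ k, a j k • δxz n k τ := by
      rw [h2 n j τ hτ, add_sub_cancel_right]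
    have e0' : znode n.castSucc 0 = z n j 0 - Δx • ∑ k, a j k • δxz n k 0 := by
      rw [h2 n j 0 h0m, add_sub_cancel_right]
    rw [e0, e0', hz1' n j τ hτ]
    rw [Finset.sum_congr rfl (fun (k : Fin r) (_ : k ∈ Finset.univ) => by rw [hzx' n k τ hτ])]
    simp only [smul_add, Finset.sum_add_distrib]
    rw [← combsub Δt Δx (fun i => Lint c i τ) (fun i => F n j i)
      (fun k => a j k) (fun k i => Hh n k i)]
    abel
  have j0 : Fin r := ⟨0, hr⟩
  set Wf : Fin N → Fin s → (Fin d → ℝ) :=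
    fun n i => F n j0 i - Δx • ∑ k, a j0 k • Hh n k i with hWfdef
  have hWindep : ∀ n j i, F n j i - Δx • ∑ k, a j k • Hh n k i = Wf n i := by
    intro n j
    refine LI' c hc hΔt _ _ ?_
    intro τ hτ
    exact add_left_cancel ((hrep n j τ hτ).symm.trans (hrep n j0 τ hτ))
  set Wx : Fin (N+1) → Fin s → (Fin d → ℝ) :=
    fun m i => if h : (m : ℕ) < N then Wf ⟨m, h⟩ i else Wf ⟨0, hN⟩ i with hWxdef
  have hWxcast : ∀ (n : Fin N) i, Wx n.castSucc i = Wf n i := by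
    intro n i
    have hlt : ((n.castSucc : Fin (N+1)) : ℕ) < N := n.isLt
    simp only [hWxdef]
    rw [dif_pos hlt]
    rfl
  have hnodesucc : ∀ (n : Fin N), ∀ τ ∈ Set.Icc (0:ℝ) 1,
      znode n.succ τ = znode n.succ 0 + Δt • ∑ i, Lint c i τ • Wx n.succ i := by
    intro n τ hτ
    by_cases hlt : ((n : ℕ) + 1) < N
    · have A := hrep ⟨(n:ℕ)+1, hlt⟩ j0 τ hτ
      rw [Finset.sum_congr rfl (fun i (_ : i ∈ Finset.univ) =>
        by rw [hWindep ⟨(n:ℕ)+1, hlt⟩ j0 i])] at A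
      have e : (⟨(n:ℕ)+1, hlt⟩ : Fin N).castSucc = n.succ := Fin.ext rfl
      rw [e] at A
      rw [A]
      have ew : ∀ i, Wf ⟨(n:ℕ)+1, hlt⟩ i = Wx n.succ i := by
        intro i
        simp only [hWxdef]
        rw [dif_pos (show ((n.succ : Fin (N+1)) : ℕ) < N from hlt)]
        rfl
      rw [Finset.sum_congr rfl (fun i (_ : i ∈ Finset.univ) => by rw [ew i])]
    · have hNe : (n:ℕ) + 1 = N := Nat.le_antisymm (Nat.succ_le_of_lt n.isLt) (not_lt.mp hlt)
      have hlast : n.succ = Fin.last N := Fin.ext (by simp [Fin.val_last, hNe])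
      have hz0 : (⟨0, hN⟩ : Fin N).castSucc = (0 : Fin (N+1)) := Fin.ext rfl
      have A := hrep ⟨0, hN⟩ j0 τ hτ
      rw [Finset.sum_congr rfl (fun i (_ : i ∈ Finset.univ) =>
        by rw [hWindep ⟨0, hN⟩ j0 i])] at A
      rw [hz0] at A
      rw [hlast, hper, A]
      have ew : ∀ i, Wf ⟨0, hN⟩ i = Wx (Fin.last N) i := by
        intro i
        simp only [hWxdef]
        rw [dif_neg (show ¬(((Fin.last N : Fin (N+1)) : ℕ) < N) from by
          simp [Fin.val_last])]
      rw [Finset.sum_congr rfl (fun i (_ : i ∈ Finset.univ) => by rw [ew i])]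
  have hWsucc : ∀ (n : Fin N) i, Wx n.succ i = Wf n i + Δx • ∑ j, bt j • Hh n j i := by
    intro n
    refine LI' c hc hΔt _ _ ?_
    intro τ hτ
    have A := hnodesucc n τ hτ
    have B : znode n.succ τ = znode n.succ 0
        + Δt • ∑ i, Lint c i τ • (Wf n i + Δx • ∑ j, bt j • Hh n j i) := by
      have C := hrep n j0 τ hτ
      rw [Finset.sum_congr rfl (fun i (_ : i ∈ Finset.univ) =>
        by rw [hWindep n j0 i])] at C
      rw [h5 n τ hτ, h5 n 0 h0m, C]
      rw [Finset.sum_congr rfl (fun (j : Fin r) (_ : j ∈ Finset.univ) => by rw [hzx' n j τ hτ])]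
      rw [← combadd Δt Δx (fun i => Lint c i τ) (fun i => Wf n i)
        (fun j => bt j) (fun j i => Hh n j i)]
      simp only [smul_add, Finset.sum_add_distrib]
      abel
    exact add_left_cancel (A.symm.trans B)
  have hcell : ∀ (n : Fin N) (i : Fin s),
      Δx * ∑ j, bt j * (F n j i ⬝ᵥ K.mulVec (G n j i) - P n j i ⬝ᵥ K.mulVec (Hh n j i))
        = Wx n.succ i ⬝ᵥ K.mulVec (Q n.succ i)
          - Wx n.castSucc i ⬝ᵥ K.mulVec (Q n.castSucc i) := by
    intro n i
    refine cellalg K hK bt a hsymp Δx (fun j => F n j i) (fun j => G n j i)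
      (fun j => Hh n j i) (fun j => P n j i) (Q n.castSucc i) (Q n.succ i)
      (Wx n.castSucc i) (Wx n.succ i) (fun j => hPrel n j i) ?_ (hQrel n i) ?_
    · intro j
      rw [hWxcast n i]
      exact eq_add_of_sub_eq (hWindep n j i)
    · rw [hWxcast n i]
      exact hWsucc n i
  open Fin.NatCast in
  have tel : ∀ i : Fin s, ∑ n : Fin N,
      (Wx n.succ i ⬝ᵥ K.mulVec (Q n.succ i)
        - Wx n.castSucc i ⬝ᵥ K.mulVec (Q n.castSucc i)) = 0 := by
    intro i
    set Y : ℕ → ℝ := fun m => Wx (m : Fin (N+1)) i ⬝ᵥ K.mulVec (Q (m : Fin (N+1)) i) with hYdef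
    have conv : ∀ n : Fin N,
        Wx n.succ i ⬝ᵥ K.mulVec (Q n.succ i) - Wx n.castSucc i ⬝ᵥ K.mulVec (Q n.castSucc i)
          = (fun m : ℕ => Y (m+1) - Y m) (n : ℕ) := by
      intro n
      have e1 : (((n:ℕ)+1 : ℕ) : Fin (N+1)) = n.succ :=
        Fin.ext (by rw [Fin.val_cast_of_lt (Nat.succ_lt_succ n.isLt)]; rfl)
      have e2 : (((n:ℕ) : ℕ) : Fin (N+1)) = n.castSucc :=
        Fin.ext (by rw [Fin.val_cast_of_lt (Nat.lt_succ_of_lt n.isLt)]; rfl)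
      simp only [hYdef]
      rw [e1, e2]
    rw [Finset.sum_congr rfl fun n _ => conv n]
    rw [Fin.sum_univ_eq_sum_range (fun m => Y (m+1) - Y m) N]
    rw [Finset.sum_range_sub Y N]
    have eN : ((N : ℕ) : Fin (N+1)) = Fin.last N :=
      Fin.ext (by rw [Fin.val_cast_of_lt (Nat.lt_succ_self N)]; rfl)
    have hQper : Q (Fin.last N) i = Q (0 : Fin (N+1)) i := by
      simp only [hQdef]
      rw [hper]
    have hWxper : Wx (Fin.last N) i = Wx (0 : Fin (N+1)) i := by
      simp only [hWxdef]
      rw [dif_neg (show ¬(((Fin.last N : Fin (N+1)) : ℕ) < N) from by simp [Fin.val_last]),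
        dif_pos (show (((0 : Fin (N+1)) : Fin (N+1)) : ℕ) < N from hN)]
      rfl
    simp only [hYdef]
    rw [eN, Nat.cast_zero, hQper, hWxper, sub_self]
  rw [← sub_eq_zero, ← mul_sub, ← Finset.sum_sub_distrib]
  have hsum1 : ∀ n : Fin N, (∑ j, bt j * E1 n j) - (∑ j, bt j * E0 n j)
      = ∑ j, bt j * (E1 n j - E0 n j) := by
    intro n
    rw [← Finset.sum_sub_distrib]
    exact Finset.sum_congr rfl fun j _ => (mul_sub _ _ _).symm
  rw [Finset.sum_congr rfl fun n _ => hsum1 n]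
  have key : ∀ n : Fin N, Δx * ∑ j, bt j * (E1 n j - E0 n j)
      = Δt/2 * ∑ i, bw c i * (Wx n.succ i ⬝ᵥ K.mulVec (Q n.succ i)
          - Wx n.castSucc i ⬝ᵥ K.mulVec (Q n.castSucc i)) := by
    intro n
    rw [Finset.sum_congr rfl fun j (_ : j ∈ Finset.univ) => by rw [hE n j]]
    rw [scalar_rearrange Δx (Δt/2) bt (bw c) (fun j i =>
      F n j i ⬝ᵥ K.mulVec (G n j i) - P n j i ⬝ᵥ K.mulVec (Hh n j i))]
    congr 1
    exact Finset.sum_congr rfl fun i _ => by rw [hcell n i]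
  rw [Finset.mul_sum]
  rw [Finset.sum_congr rfl fun n _ => key n]
  rw [scalar_rearrange2 (Δt/2) (bw c) (fun n i =>
    Wx n.succ i ⬝ᵥ K.mulVec (Q n.succ i) - Wx n.castSucc i ⬝ᵥ K.mulVec (Q n.castSucc i))]
  rw [Finset.sum_congr rfl fun i (_ : i ∈ Finset.univ) => by rw [tel i]]
  simp
end cell
end curve
end

section
/- (Local energy conservation law of the coupled nonlinear Schrödinger equations) Let α, β ∈ ℝ and let u, v : ℝ × ℝ → ℂ, (x,t) ↦ u(x,t), v(x,t), be twice continuously differentiable solutions of i u_t + i α u_x + (1/2) u_xx + (|u|² + β|v|²) u = 0 and i v_t − i α v_x + (1/2) v_xx + (β|u|² + |v|²) v = 0. Write u = q₁ + i q₂, v = q₃ + i q₄ with q₁, q₂, q₃, q₄ real, and set p_i = (1/2) ∂_x q_i for i = 1,2,3,4, S = −(1/4)(q₁²+q₂²)² − (1/4)(q₃²+q₄²)² − (1/2) β (q₁²+q₂²)(q₃²+q₄²) − (p₁²+p₂²+p₃²+p₄²), E = S − α(q₂p₁ − q₁p₂ + q₃p₄ − q₄p₃) − (1/2) Σ_{i=1}^4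 (q_i ∂_x p_i − 2 p_i²), and F = (1/2)( α(q₂∂_t q₁ − q₁∂_t q₂ + q₃∂_t q₄ − q₄∂_t q₃) + Σ_{i=1}^4 (q_i ∂_t p_i − p_i ∂_t q_i) ). Then ∂_t E + ∂_x F = 0 everywhere. -/
open scoped Matrix

noncomputable section

namespace Stmt15Aux

open Filter Topology

variable {E' : Type*} [NormedAddCommGroup E'] [NormedSpace ℝ E']

def pdX (f : ℝ × ℝ → E') : ℝ × ℝ → E' := fun p => fderiv ℝ f p (1, 0)
def pdT (f : ℝ × ℝ → E') : ℝ × ℝ → E' := fun p => fderiv ℝ f p (0, 1)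

lemma hasDerivAt_px {f : ℝ × ℝ → E'} {x t : ℝ} (hf : DifferentiableAt ℝ f (x, t)) :
    HasDerivAt (fun ξ => f (ξ, t)) (pdX f (x, t)) x := by
  have h1 : HasDerivAt (fun ξ : ℝ => (ξ, t)) ((1 : ℝ), (0 : ℝ)) x :=
    HasDerivAt.prodMk (hasDerivAt_id x) (hasDerivAt_const x t)
  exact hf.hasFDerivAt.comp_hasDerivAt x h1

lemma hasDerivAt_pt {f : ℝ × ℝ → E'} {x t : ℝ} (hf : DifferentiableAt ℝ f (x, t)) :
    HasDerivAt (fun τ => f (x, τ)) (pdT f (x, t)) t := by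
  have h1 : HasDerivAt (fun τ : ℝ => (x, τ)) ((0 : ℝ), (1 : ℝ)) t :=
    HasDerivAt.prodMk (hasDerivAt_const t x) (hasDerivAt_id t)
  exact hf.hasFDerivAt.comp_hasDerivAt t h1

lemma contDiff_px1 {f : ℝ × ℝ → E'} (hf : ContDiff ℝ 2 f) : ContDiff ℝ 1 (pdX f) :=
  (hf.fderiv_right (m := 1) (by norm_num)).clm_apply contDiff_const

lemma contDiff_pt1 {f : ℝ × ℝ → E'} (hf : ContDiff ℝ 2 f) : ContDiff ℝ 1 (pdT f) :=
  (hf.fderiv_right (m := 1) (by norm_num)).clm_apply contDiff_const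

lemma continuous_ptE {f : ℝ × ℝ → E'} (hf : ContDiff ℝ 1 f) : Continuous (pdT f) :=
  (ContinuousLinearMap.apply ℝ E' ((0:ℝ),(1:ℝ))).continuous.comp
    (hf.fderiv_right (m := 0) (by norm_num)).continuous

lemma _root_.HasDerivAt.creal {f : ℝ → ℂ} {f' : ℂ} {t : ℝ} (h : HasDerivAt f f' t) :
    HasDerivAt (fun τ => (f τ).re) f'.re t :=
  Complex.reCLM.hasFDerivAt.comp_hasDerivAt t h

lemma _root_.HasDerivAt.cimag {f : ℝ → ℂ} {f' : ℂ} {t : ℝ} (h : HasDerivAt f f' t) :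
    HasDerivAt (fun τ => (f τ).im) f'.im t :=
  Complex.imCLM.hasFDerivAt.comp_hasDerivAt t h

lemma pt_px_symm {f : ℝ × ℝ → E'} (hf : ContDiff ℝ 2 f) (p : ℝ × ℝ) :
    pdT (pdX f) p = pdX (pdT f) p := by
  have hd : ∀ y, HasFDerivAt f (fderiv ℝ f y) y := fun y =>
    (hf.differentiable two_ne_zero).differentiableAt.hasFDerivAt
  have h1 : ContDiff ℝ 1 (fderiv ℝ f) := hf.fderiv_right (by norm_num)
  have h2 : HasFDerivAt (fderiv ℝ f) (fderiv ℝ (fderiv ℝ f) p) p :=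
    (h1.differentiable one_ne_zero).differentiableAt.hasFDerivAt
  have hsymm := second_derivative_symmetric hd h2 (1, 0) (0, 1)
  have e1 : pdT (pdX f) p = fderiv ℝ (fderiv ℝ f) p (0, 1) (1, 0) := by
    have h3 : HasFDerivAt (pdX f)
        ((ContinuousLinearMap.apply ℝ E' ((1 : ℝ), (0 : ℝ))).comp (fderiv ℝ (fderiv ℝ f) p)) p :=
      (ContinuousLinearMap.apply ℝ E' ((1 : ℝ), (0 : ℝ))).hasFDerivAt.comp p h2
    simp [pdT, h3.fderiv]
  have e2 : pdX (pdT f) p = fderiv ℝ (fderiv ℝ f) p (1, 0) (0, 1) := by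
    have h3 : HasFDerivAt (pdT f)
        ((ContinuousLinearMap.apply ℝ E' ((0 : ℝ), (1 : ℝ))).comp (fderiv ℝ (fderiv ℝ f) p)) p :=
      (ContinuousLinearMap.apply ℝ E' ((0 : ℝ), (1 : ℝ))).hasFDerivAt.comp p h2
    simp [pdX, h3.fderiv]
  rw [e1, e2, hsymm]

lemma schwarz_peano (g gx gt gxt : ℝ → ℝ → E') (x₀ t₀ : ℝ)
    (hgx : ∀ x t, HasDerivAt (fun ξ => g ξ t) (gx x t) x)
    (hgt : ∀ x t, HasDerivAt (fun τ => g x τ) (gt x t) t)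
    (hgxt : ∀ x t, HasDerivAt (fun τ => gx x τ) (gxt x t) t)
    (hcont : ContinuousAt (fun p : ℝ × ℝ => gxt p.1 p.2) (x₀, t₀)) :
    HasDerivAt (fun ξ => gt ξ t₀) (gxt x₀ t₀) x₀ := by
  set c := gxt x₀ t₀ with hc
  rw [hasDerivAt_iff_isLittleO]
  rw [Asymptotics.isLittleO_iff]
  intro ε hε
  obtain ⟨δ, hδpos, hδ⟩ : ∃ δ > 0, ∀ x t : ℝ, |x - x₀| < δ → |t - t₀| < δ →
      ‖gxt x t - c‖ ≤ ε := by
    have h0 := Metric.continuousAt_iff.1 hcont ε hε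
    obtain ⟨δ, hδpos, hδ⟩ := h0
    refine ⟨δ, hδpos, fun x t hx ht => ?_⟩
    have hdist : dist ((x, t) : ℝ × ℝ) (x₀, t₀) < δ := by
      rw [Prod.dist_eq]
      simp only [Real.dist_eq]
      exact max_lt hx ht
    have h1 := hδ (x := (x, t)) hdist
    rw [dist_eq_norm] at h1
    exact h1.le
  have key : ∀ x' : ℝ, |x' - x₀| < δ → ‖gt x' t₀ - gt x₀ t₀ - (x' - x₀) • c‖ ≤ ε * |x' - x₀| := by
    intro x' hx'
    have step2 : ∀ k : ℝ, |k| < δ →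
        ‖(g x' (t₀ + k) - g x' t₀) - (g x₀ (t₀ + k) - g x₀ t₀) - (x' - x₀) • (k • c)‖
          ≤ (ε * |k|) * |x' - x₀| := by
      intro k hk
      have step1 : ∀ s : ℝ, |s - x₀| < δ → ‖gx s (t₀ + k) - gx s t₀ - k • c‖ ≤ ε * |k| := by
        intro s hs
        have hset : ∀ τ ∈ Set.uIcc t₀ (t₀ + k), |τ - t₀| < δ := by
          intro τ hτ
          rcases Set.mem_uIcc.1 hτ with h | h
          · have h1 : |τ - t₀| ≤ |k| := by
              rw [abs_sub_le_iff]
              constructor <;> nlinarith [abs_nonneg k, le_abs_self k, neg_abs_le k]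
            exact lt_of_le_of_lt h1 hk
          · have h1 : |τ - t₀| ≤ |k| := by
              rw [abs_sub_le_iff]
              constructor <;> nlinarith [abs_nonneg k, le_abs_self k, neg_abs_le k]
            exact lt_of_le_of_lt h1 hk
        have hder : ∀ τ ∈ Set.uIcc t₀ (t₀ + k),
            HasDerivWithinAt (fun τ => gx s τ - τ • c) (gxt s τ - c) (Set.uIcc t₀ (t₀ + k)) τ := by
          intro τ _
          have h1 : HasDerivAt (fun τ : ℝ => gx s τ - τ • c) (gxt s τ - (1 : ℝ) • c) τ :=
            (hgxt s τ).sub ((hasDerivAt_id τ).smul_const c)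
          rw [one_smul] at h1
          exact h1.hasDerivWithinAt
        have hbound : ∀ τ ∈ Set.uIcc t₀ (t₀ + k), ‖gxt s τ - c‖ ≤ ε := fun τ hτ =>
          hδ s τ hs (hset τ hτ)
        have heq : (fun τ => gx s τ - τ • c) (t₀ + k) - (fun τ => gx s τ - τ • c) t₀
            = gx s (t₀ + k) - gx s t₀ - k • c := by
          simp only [add_smul]
          abel
        calc ‖gx s (t₀ + k) - gx s t₀ - k • c‖
            = ‖(fun τ => gx s τ - τ • c) (t₀ + k) - (fun τ => gx s τ - τ • c) t₀‖ := by rw [heq]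
          _ ≤ ε * ‖t₀ + k - t₀‖ := (convex_uIcc t₀ (t₀ + k)).norm_image_sub_le_of_norm_hasDerivWithin_le
              hder hbound (Set.left_mem_uIcc) (Set.right_mem_uIcc)
          _ = ε * |k| := by rw [add_sub_cancel_left]; rfl
      have hsetx : ∀ s ∈ Set.uIcc x₀ x', |s - x₀| < δ := by
        intro s hs
        rcases Set.mem_uIcc.1 hs with h | h
        · have h1 : |s - x₀| ≤ |x' - x₀| := by
            rw [abs_sub_le_iff]
            constructor <;> nlinarith [le_abs_self (x' - x₀), neg_abs_le (x' - x₀)]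
          exact lt_of_le_of_lt h1 hx'
        · have h1 : |s - x₀| ≤ |x' - x₀| := by
            rw [abs_sub_le_iff]
            constructor <;> nlinarith [le_abs_self (x' - x₀), neg_abs_le (x' - x₀)]
          exact lt_of_le_of_lt h1 hx'
      have hderx : ∀ s ∈ Set.uIcc x₀ x',
          HasDerivWithinAt (fun s => g s (t₀ + k) - g s t₀ - s • (k • c))
            (gx s (t₀ + k) - gx s t₀ - k • c) (Set.uIcc x₀ x') s := by
        intro s _
        have h1 : HasDerivAt (fun s : ℝ => g s (t₀ + k) - g s t₀ - s • (k • c))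
            (gx s (t₀ + k) - gx s t₀ - (1 : ℝ) • (k • c)) s :=
          ((hgx s (t₀ + k)).sub (hgx s t₀)).sub ((hasDerivAt_id s).smul_const (k • c))
        rw [one_smul] at h1
        exact h1.hasDerivWithinAt
      have hboundx : ∀ s ∈ Set.uIcc x₀ x', ‖gx s (t₀ + k) - gx s t₀ - k • c‖ ≤ ε * |k| :=
        fun s hs => step1 s (hsetx s hs)
      have h2 := (convex_uIcc x₀ x').norm_image_sub_le_of_norm_hasDerivWithin_le
        hderx hboundx (Set.left_mem_uIcc) (Set.right_mem_uIcc)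
      have heq2 : (fun s => g s (t₀ + k) - g s t₀ - s • (k • c)) x' -
          (fun s => g s (t₀ + k) - g s t₀ - s • (k • c)) x₀
          = (g x' (t₀ + k) - g x' t₀) - (g x₀ (t₀ + k) - g x₀ t₀) - (x' - x₀) • (k • c) := by
        simp only [sub_smul]
        abel
      rw [heq2] at h2
      calc ‖(g x' (t₀ + k) - g x' t₀) - (g x₀ (t₀ + k) - g x₀ t₀) - (x' - x₀) • (k • c)‖
          ≤ ε * |k| * ‖x' - x₀‖ := h2
        _ = ε * |k| * |x' - x₀| := rfl
    have hlim : Tendsto (fun k : ℝ => k⁻¹ • ((g x' (t₀ + k) - g x' t₀) - (g x₀ (t₀ + k) - g x₀ t₀)))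
        (𝓝[≠] 0) (𝓝 (gt x' t₀ - gt x₀ t₀)) := by
      have l1 : Tendsto (fun k : ℝ => k⁻¹ • (g x' (t₀ + k) - g x' t₀)) (𝓝[≠] 0) (𝓝 (gt x' t₀)) :=
        (hasDerivAt_iff_tendsto_slope_zero.1 (hgt x' t₀))
      have l2 : Tendsto (fun k : ℝ => k⁻¹ • (g x₀ (t₀ + k) - g x₀ t₀)) (𝓝[≠] 0) (𝓝 (gt x₀ t₀)) :=
        (hasDerivAt_iff_tendsto_slope_zero.1 (hgt x₀ t₀))
      have l3 := l1.sub l2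
      refine l3.congr (fun k => ?_)
      module
    have hbound3 : ∀ᶠ k : ℝ in 𝓝[≠] 0,
        ‖(fun k : ℝ => k⁻¹ • ((g x' (t₀ + k) - g x' t₀) - (g x₀ (t₀ + k) - g x₀ t₀))) k
          - (x' - x₀) • c‖ ≤ ε * |x' - x₀| := by
      have hev : ∀ᶠ k : ℝ in 𝓝[≠] 0, |k| < δ ∧ k ≠ 0 := by
        filter_upwards [self_mem_nhdsWithin,
          eventually_nhdsWithin_of_eventually_nhds (Metric.eventually_nhds_iff.2
            ⟨δ, hδpos, fun {y} hy => by simpa [Real.dist_eq] using hy⟩)] with k hk1 hk2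
        exact ⟨hk2, hk1⟩
      filter_upwards [hev] with k hk0'
      obtain ⟨hk, hk0⟩ := hk0'
      have h2 := step2 k hk
      have heq3 : k⁻¹ • ((g x' (t₀ + k) - g x' t₀) - (g x₀ (t₀ + k) - g x₀ t₀)) - (x' - x₀) • c
          = k⁻¹ • (((g x' (t₀ + k) - g x' t₀) - (g x₀ (t₀ + k) - g x₀ t₀)) - (x' - x₀) • (k • c)) := by
        match_scalars <;> field_simp <;> ring
      rw [heq3, norm_smul, norm_inv, Real.norm_eq_abs]
      calc |k|⁻¹ * ‖(g x' (t₀ + k) - g x' t₀) - (g x₀ (t₀ + k) - g x₀ t₀) - (x' - x₀) • (k • c)‖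
          ≤ |k|⁻¹ * (ε * |k| * |x' - x₀|) := by
            apply mul_le_mul_of_nonneg_left h2 (by positivity)
        _ = ε * |x' - x₀| := by
            field_simp
    have h4 : Tendsto (fun k : ℝ => ‖(fun k : ℝ => k⁻¹ • ((g x' (t₀ + k) - g x' t₀) - (g x₀ (t₀ + k) - g x₀ t₀))) k - (x' - x₀) • c‖) (𝓝[≠] 0)
        (𝓝 ‖gt x' t₀ - gt x₀ t₀ - (x' - x₀) • c‖) :=
      (hlim.sub tendsto_const_nhds).norm
    exact le_of_tendsto h4 hbound3
  filter_upwards [Metric.eventually_nhds_iff.2 ⟨δ, hδpos, fun {x'} hx' => by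
    exact key x' (by simpa [Real.dist_eq] using hx')⟩] with x' h
  simpa [Real.norm_eq_abs] using h

end Stmt15Aux

open Stmt15Aux

theorem stmt15 (α β : ℝ) (u v : ℝ → ℝ → ℂ)
    (hu : ContDiff ℝ 2 fun p : ℝ × ℝ => u p.1 p.2)
    (hv : ContDiff ℝ 2 fun p : ℝ × ℝ => v p.1 p.2)
    (hpdeu : ∀ x t,
      Complex.I * deriv (fun τ => u x τ) t
        + Complex.I * (α : ℂ) * deriv (fun ξ => u ξ t) x
        + (1/2) * deriv (fun ξ => deriv (fun ξ' => u ξ' t) ξ) x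
        + (u x t * (starRingEnd ℂ) (u x t) + (β : ℂ) * (v x t * (starRingEnd ℂ) (v x t))) * u x t
        = 0)
    (hpdev : ∀ x t,
      Complex.I * deriv (fun τ => v x τ) t
        - Complex.I * (α : ℂ) * deriv (fun ξ => v ξ t) x
        + (1/2) * deriv (fun ξ => deriv (fun ξ' => v ξ' t) ξ) x
        + ((β : ℂ) * (u x t * (starRingEnd ℂ) (u x t)) + v x t * (starRingEnd ℂ) (v x t)) * v x t
        = 0)
    (q1 q2 q3 q4 p1 p2 p3 p4 S : ℝ → ℝ → ℝ)
    (hq1 : ∀ x t, q1 x t = (u x t).re) (hq2 : ∀ x t, q2 x t = (u x t).im)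
    (hq3 : ∀ x t, q3 x t = (v x t).re) (hq4 : ∀ x t, q4 x t = (v x t).im)
    (hp1 : ∀ x t, p1 x t = (1/2) * deriv (fun ξ => q1 ξ t) x)
    (hp2 : ∀ x t, p2 x t = (1/2) * deriv (fun ξ => q2 ξ t) x)
    (hp3 : ∀ x t, p3 x t = (1/2) * deriv (fun ξ => q3 ξ t) x)
    (hp4 : ∀ x t, p4 x t = (1/2) * deriv (fun ξ => q4 ξ t) x)
    (hS : ∀ x t, S x t = -(1/4) * (q1 x t ^ 2 + q2 x t ^ 2) ^ 2
        - (1/4) * (q3 x t ^ 2 + q4 x t ^ 2) ^ 2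
        - (1/2) * β * (q1 x t ^ 2 + q2 x t ^ 2) * (q3 x t ^ 2 + q4 x t ^ 2)
        - (p1 x t ^ 2 + p2 x t ^ 2 + p3 x t ^ 2 + p4 x t ^ 2))
    (E F : ℝ → ℝ → ℝ) (hE : ∀ x t, E x t = S x t
        - α * (q2 x t * p1 x t - q1 x t * p2 x t + q3 x t * p4 x t - q4 x t * p3 x t)
        - (1/2) * ((q1 x t * deriv (fun ξ => p1 ξ t) x - 2 * p1 x t ^ 2)
          + (q2 x t * deriv (fun ξ => p2 ξ t) x - 2 * p2 x t ^ 2)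
          + (q3 x t * deriv (fun ξ => p3 ξ t) x - 2 * p3 x t ^ 2)
          + (q4 x t * deriv (fun ξ => p4 ξ t) x - 2 * p4 x t ^ 2)))
    (hF : ∀ x t, F x t = (1/2) * (α * (q2 x t * deriv (fun τ => q1 x τ) t
          - q1 x t * deriv (fun τ => q2 x τ) t
          + q3 x t * deriv (fun τ => q4 x τ) t
          - q4 x t * deriv (fun τ => q3 x τ) t)
        + ((q1 x t * deriv (fun τ => p1 x τ) t - p1 x t * deriv (fun τ => q1 x τ) t)
          + (q2 x t * deriv (fun τ => p2 x τ) t - p2 x t * deriv (fun τ => q2 x τ) t)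
          + (q3 x t * deriv (fun τ => p3 x τ) t - p3 x t * deriv (fun τ => q3 x τ) t)
          + (q4 x t * deriv (fun τ => p4 x τ) t - p4 x t * deriv (fun τ => q4 x τ) t)))) :
    ∀ x t, deriv (fun τ => E x τ) t + deriv (fun ξ => F ξ t) x = 0 := by
  intro x t
  have hUd : Differentiable ℝ (fun p : ℝ × ℝ => u p.1 p.2) := hu.differentiable two_ne_zero
  have hVd : Differentiable ℝ (fun p : ℝ × ℝ => v p.1 p.2) := hv.differentiable two_ne_zero
  have hUxC : ContDiff ℝ 1 (pdX (fun p : ℝ × ℝ => u p.1 p.2)) := contDiff_px1 hu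
  have hUtC : ContDiff ℝ 1 (pdT (fun p : ℝ × ℝ => u p.1 p.2)) := contDiff_pt1 hu
  have hVxC : ContDiff ℝ 1 (pdX (fun p : ℝ × ℝ => v p.1 p.2)) := contDiff_px1 hv
  have hVtC : ContDiff ℝ 1 (pdT (fun p : ℝ × ℝ => v p.1 p.2)) := contDiff_pt1 hv
  have du1 : ∀ a b : ℝ, deriv (fun ξ => u ξ b) a = (pdX (fun p : ℝ × ℝ => u p.1 p.2)) (a, b) := fun a b =>
    (hasDerivAt_px (hUd (a, b))).deriv
  have du2 : ∀ a b : ℝ, deriv (fun τ => u a τ) b = (pdT (fun p : ℝ × ℝ => u p.1 p.2)) (a, b) := fun a b =>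
    (hasDerivAt_pt (hUd (a, b))).deriv
  have dv1 : ∀ a b : ℝ, deriv (fun ξ => v ξ b) a = (pdX (fun p : ℝ × ℝ => v p.1 p.2)) (a, b) := fun a b =>
    (hasDerivAt_px (hVd (a, b))).deriv
  have dv2 : ∀ a b : ℝ, deriv (fun τ => v a τ) b = (pdT (fun p : ℝ × ℝ => v p.1 p.2)) (a, b) := fun a b =>
    (hasDerivAt_pt (hVd (a, b))).deriv
  have duxx : ∀ a b : ℝ, deriv (fun ξ => deriv (fun ξ' => u ξ' b) ξ) a = (pdX (pdX (fun p : ℝ × ℝ => u p.1 p.2))) (a, b) := by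
    intro a b
    rw [show (fun ξ => deriv (fun ξ' => u ξ' b) ξ) = fun ξ => (pdX (fun p : ℝ × ℝ => u p.1 p.2)) (ξ, b) from
      funext fun ξ => du1 ξ b]
    exact (hasDerivAt_px (hUxC.differentiable one_ne_zero (a, b))).deriv
  have dvxx : ∀ a b : ℝ, deriv (fun ξ => deriv (fun ξ' => v ξ' b) ξ) a = (pdX (pdX (fun p : ℝ × ℝ => v p.1 p.2))) (a, b) := by
    intro a b
    rw [show (fun ξ => deriv (fun ξ' => v ξ' b) ξ) = fun ξ => (pdX (fun p : ℝ × ℝ => v p.1 p.2)) (ξ, b) from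
      funext fun ξ => dv1 ξ b]
    exact (hasDerivAt_px (hVxC.differentiable one_ne_zero (a, b))).deriv
  have hpdeCu : ∀ a b : ℝ, (pdX (pdX (fun p : ℝ × ℝ => u p.1 p.2))) (a, b) =
      -2*Complex.I*((pdT (fun p : ℝ × ℝ => u p.1 p.2)) (a, b)) - 2*Complex.I*(α:ℂ)*((pdX (fun p : ℝ × ℝ => u p.1 p.2)) (a, b))
      - 2*((u a b * (starRingEnd ℂ) (u a b)) + (β:ℂ)*(v a b * (starRingEnd ℂ) (v a b)))*(u a b) := by
    intro a b
    have h := hpdeu a b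
    rw [du2 a b, du1 a b, duxx a b] at h
    linear_combination (2:ℂ) * h
  have hpdeCv : ∀ a b : ℝ, (pdX (pdX (fun p : ℝ × ℝ => v p.1 p.2))) (a, b) =
      -2*Complex.I*((pdT (fun p : ℝ × ℝ => v p.1 p.2)) (a, b)) + 2*Complex.I*(α:ℂ)*((pdX (fun p : ℝ × ℝ => v p.1 p.2)) (a, b))
      - 2*((β:ℂ)*(u a b * (starRingEnd ℂ) (u a b)) + (v a b * (starRingEnd ℂ) (v a b)))*(v a b) := by
    intro a b
    have h := hpdev a b
    rw [dv2 a b, dv1 a b, dvxx a b] at h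
    linear_combination (2:ℂ) * h
  have hU1 : ContDiff ℝ 1 (fun p : ℝ × ℝ => u p.1 p.2) := hu.of_le one_le_two
  have hV1 : ContDiff ℝ 1 (fun p : ℝ × ℝ => v p.1 p.2) := hv.of_le one_le_two
  have hcu : ContDiff ℝ 1 (fun p : ℝ × ℝ => (starRingEnd ℂ) (u p.1 p.2)) :=
    Complex.conjCLE.toContinuousLinearMap.contDiff.comp hU1
  have hcv : ContDiff ℝ 1 (fun p : ℝ × ℝ => (starRingEnd ℂ) (v p.1 p.2)) :=
    Complex.conjCLE.toContinuousLinearMap.contDiff.comp hV1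
  have hUxxC : ContDiff ℝ 1 (pdX (pdX (fun p : ℝ × ℝ => u p.1 p.2))) := by
    rw [show (pdX (pdX (fun p : ℝ × ℝ => u p.1 p.2))) = fun p : ℝ × ℝ =>
      -2*Complex.I*((pdT (fun p : ℝ × ℝ => u p.1 p.2)) p) - 2*Complex.I*(α:ℂ)*((pdX (fun p : ℝ × ℝ => u p.1 p.2)) p)
      - 2*((u p.1 p.2 * (starRingEnd ℂ) (u p.1 p.2)) + (β:ℂ)*(v p.1 p.2 * (starRingEnd ℂ) (v p.1 p.2)))*(u p.1 p.2) from
      funext fun p => hpdeCu p.1 p.2]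
    exact ((contDiff_const.mul hUtC).sub (contDiff_const.mul hUxC)).sub
      ((contDiff_const.mul ((hU1.mul hcu).add (contDiff_const.mul (hV1.mul hcv)))).mul hU1)
  have hVxxC : ContDiff ℝ 1 (pdX (pdX (fun p : ℝ × ℝ => v p.1 p.2))) := by
    rw [show (pdX (pdX (fun p : ℝ × ℝ => v p.1 p.2))) = fun p : ℝ × ℝ =>
      -2*Complex.I*((pdT (fun p : ℝ × ℝ => v p.1 p.2)) p) + 2*Complex.I*(α:ℂ)*((pdX (fun p : ℝ × ℝ => v p.1 p.2)) p)
      - 2*((β:ℂ)*(u p.1 p.2 * (starRingEnd ℂ) (u p.1 p.2)) + (v p.1 p.2 * (starRingEnd ℂ) (v p.1 p.2)))*(v p.1 p.2) from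
      funext fun p => hpdeCv p.1 p.2]
    exact ((contDiff_const.mul hVtC).add (contDiff_const.mul hVxC)).sub
      ((contDiff_const.mul ((contDiff_const.mul (hU1.mul hcu)).add (hV1.mul hcv))).mul hV1)
  have hsymU : (pdT (pdX (fun p : ℝ × ℝ => u p.1 p.2))) (x, t) = (pdX (pdT (fun p : ℝ × ℝ => u p.1 p.2))) (x, t) := pt_px_symm hu (x, t)
  have hsymV : (pdT (pdX (fun p : ℝ × ℝ => v p.1 p.2))) (x, t) = (pdX (pdT (fun p : ℝ × ℝ => v p.1 p.2))) (x, t) := pt_px_symm hv (x, t)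
  have fuxtC : HasDerivAt (fun ξ => (pdT (pdX (fun p : ℝ × ℝ => u p.1 p.2))) (ξ, t)) ((pdT (pdX (pdX (fun p : ℝ × ℝ => u p.1 p.2)))) (x, t)) x :=
    schwarz_peano (fun a b => (pdX (fun p : ℝ × ℝ => u p.1 p.2)) (a, b)) (fun a b => (pdX (pdX (fun p : ℝ × ℝ => u p.1 p.2))) (a, b))
      (fun a b => (pdT (pdX (fun p : ℝ × ℝ => u p.1 p.2))) (a, b)) (fun a b => (pdT (pdX (pdX (fun p : ℝ × ℝ => u p.1 p.2)))) (a, b)) x t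
      (fun a b => hasDerivAt_px (hUxC.differentiable one_ne_zero (a, b)))
      (fun a b => hasDerivAt_pt (hUxC.differentiable one_ne_zero (a, b)))
      (fun a b => hasDerivAt_pt (hUxxC.differentiable one_ne_zero (a, b)))
      ((continuous_ptE hUxxC).continuousAt)
  have fvxtC : HasDerivAt (fun ξ => (pdT (pdX (fun p : ℝ × ℝ => v p.1 p.2))) (ξ, t)) ((pdT (pdX (pdX (fun p : ℝ × ℝ => v p.1 p.2)))) (x, t)) x :=
    schwarz_peano (fun a b => (pdX (fun p : ℝ × ℝ => v p.1 p.2)) (a, b)) (fun a b => (pdX (pdX (fun p : ℝ × ℝ => v p.1 p.2))) (a, b))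
      (fun a b => (pdT (pdX (fun p : ℝ × ℝ => v p.1 p.2))) (a, b)) (fun a b => (pdT (pdX (pdX (fun p : ℝ × ℝ => v p.1 p.2)))) (a, b)) x t
      (fun a b => hasDerivAt_px (hVxC.differentiable one_ne_zero (a, b)))
      (fun a b => hasDerivAt_pt (hVxC.differentiable one_ne_zero (a, b)))
      (fun a b => hasDerivAt_pt (hVxxC.differentiable one_ne_zero (a, b)))
      ((continuous_ptE hVxxC).continuousAt)
  have hdq1x : ∀ a b : ℝ, deriv (fun ξ => q1 ξ b) a = ((pdX (fun p : ℝ × ℝ => u p.1 p.2)) (a, b)).re := by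
    intro a b
    rw [show (fun ξ => q1 ξ b) = fun ξ => ((u ξ b).re) from funext fun ξ => hq1 ξ b]
    exact ((hasDerivAt_px (hUd (a, b))).creal).deriv
  have hp1' : ∀ a b : ℝ, p1 a b = (1/2) * ((pdX (fun p : ℝ × ℝ => u p.1 p.2)) (a, b)).re := by
    intro a b
    rw [hp1 a b, hdq1x a b]
  have hdp1x : ∀ a b : ℝ, deriv (fun ξ => p1 ξ b) a = (1/2) * ((pdX (pdX (fun p : ℝ × ℝ => u p.1 p.2))) (a, b)).re := by
    intro a b
    rw [show (fun ξ => p1 ξ b) = fun ξ => (1/2) * ((pdX (fun p : ℝ × ℝ => u p.1 p.2)) (ξ, b)).re from funext fun ξ => hp1' ξ b]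
    exact (((hasDerivAt_px (hUxC.differentiable one_ne_zero (a, b))).creal).const_mul (1/2)).deriv
  have hdq1t : ∀ a b : ℝ, deriv (fun τ => q1 a τ) b = ((pdT (fun p : ℝ × ℝ => u p.1 p.2)) (a, b)).re := by
    intro a b
    rw [show (fun τ => q1 a τ) = fun τ => ((u a τ).re) from funext fun τ => hq1 a τ]
    exact ((hasDerivAt_pt (hUd (a, b))).creal).deriv
  have hdp1t : ∀ a b : ℝ, deriv (fun τ => p1 a τ) b = (1/2) * ((pdT (pdX (fun p : ℝ × ℝ => u p.1 p.2))) (a, b)).re := by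
    intro a b
    rw [show (fun τ => p1 a τ) = fun τ => (1/2) * ((pdX (fun p : ℝ × ℝ => u p.1 p.2)) (a, τ)).re from funext fun τ => hp1' a τ]
    exact (((hasDerivAt_pt (hUxC.differentiable one_ne_zero (a, b))).creal).const_mul (1/2)).deriv
  have hdq2x : ∀ a b : ℝ, deriv (fun ξ => q2 ξ b) a = ((pdX (fun p : ℝ × ℝ => u p.1 p.2)) (a, b)).im := by
    intro a b
    rw [show (fun ξ => q2 ξ b) = fun ξ => ((u ξ b).im) from funext fun ξ => hq2 ξ b]
    exact ((hasDerivAt_px (hUd (a, b))).cimag).deriv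
  have hp2' : ∀ a b : ℝ, p2 a b = (1/2) * ((pdX (fun p : ℝ × ℝ => u p.1 p.2)) (a, b)).im := by
    intro a b
    rw [hp2 a b, hdq2x a b]
  have hdp2x : ∀ a b : ℝ, deriv (fun ξ => p2 ξ b) a = (1/2) * ((pdX (pdX (fun p : ℝ × ℝ => u p.1 p.2))) (a, b)).im := by
    intro a b
    rw [show (fun ξ => p2 ξ b) = fun ξ => (1/2) * ((pdX (fun p : ℝ × ℝ => u p.1 p.2)) (ξ, b)).im from funext fun ξ => hp2' ξ b]
    exact (((hasDerivAt_px (hUxC.differentiable one_ne_zero (a, b))).cimag).const_mul (1/2)).deriv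
  have hdq2t : ∀ a b : ℝ, deriv (fun τ => q2 a τ) b = ((pdT (fun p : ℝ × ℝ => u p.1 p.2)) (a, b)).im := by
    intro a b
    rw [show (fun τ => q2 a τ) = fun τ => ((u a τ).im) from funext fun τ => hq2 a τ]
    exact ((hasDerivAt_pt (hUd (a, b))).cimag).deriv
  have hdp2t : ∀ a b : ℝ, deriv (fun τ => p2 a τ) b = (1/2) * ((pdT (pdX (fun p : ℝ × ℝ => u p.1 p.2))) (a, b)).im := by
    intro a b
    rw [show (fun τ => p2 a τ) = fun τ => (1/2) * ((pdX (fun p : ℝ × ℝ => u p.1 p.2)) (a, τ)).im from funext fun τ => hp2' a τ]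
    exact (((hasDerivAt_pt (hUxC.differentiable one_ne_zero (a, b))).cimag).const_mul (1/2)).deriv
  have hdq3x : ∀ a b : ℝ, deriv (fun ξ => q3 ξ b) a = ((pdX (fun p : ℝ × ℝ => v p.1 p.2)) (a, b)).re := by
    intro a b
    rw [show (fun ξ => q3 ξ b) = fun ξ => ((v ξ b).re) from funext fun ξ => hq3 ξ b]
    exact ((hasDerivAt_px (hVd (a, b))).creal).deriv
  have hp3' : ∀ a b : ℝ, p3 a b = (1/2) * ((pdX (fun p : ℝ × ℝ => v p.1 p.2)) (a, b)).re := by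
    intro a b
    rw [hp3 a b, hdq3x a b]
  have hdp3x : ∀ a b : ℝ, deriv (fun ξ => p3 ξ b) a = (1/2) * ((pdX (pdX (fun p : ℝ × ℝ => v p.1 p.2))) (a, b)).re := by
    intro a b
    rw [show (fun ξ => p3 ξ b) = fun ξ => (1/2) * ((pdX (fun p : ℝ × ℝ => v p.1 p.2)) (ξ, b)).re from funext fun ξ => hp3' ξ b]
    exact (((hasDerivAt_px (hVxC.differentiable one_ne_zero (a, b))).creal).const_mul (1/2)).deriv
  have hdq3t : ∀ a b : ℝ, deriv (fun τ => q3 a τ) b = ((pdT (fun p : ℝ × ℝ => v p.1 p.2)) (a, b)).re := by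
    intro a b
    rw [show (fun τ => q3 a τ) = fun τ => ((v a τ).re) from funext fun τ => hq3 a τ]
    exact ((hasDerivAt_pt (hVd (a, b))).creal).deriv
  have hdp3t : ∀ a b : ℝ, deriv (fun τ => p3 a τ) b = (1/2) * ((pdT (pdX (fun p : ℝ × ℝ => v p.1 p.2))) (a, b)).re := by
    intro a b
    rw [show (fun τ => p3 a τ) = fun τ => (1/2) * ((pdX (fun p : ℝ × ℝ => v p.1 p.2)) (a, τ)).re from funext fun τ => hp3' a τ]
    exact (((hasDerivAt_pt (hVxC.differentiable one_ne_zero (a, b))).creal).const_mul (1/2)).deriv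
  have hdq4x : ∀ a b : ℝ, deriv (fun ξ => q4 ξ b) a = ((pdX (fun p : ℝ × ℝ => v p.1 p.2)) (a, b)).im := by
    intro a b
    rw [show (fun ξ => q4 ξ b) = fun ξ => ((v ξ b).im) from funext fun ξ => hq4 ξ b]
    exact ((hasDerivAt_px (hVd (a, b))).cimag).deriv
  have hp4' : ∀ a b : ℝ, p4 a b = (1/2) * ((pdX (fun p : ℝ × ℝ => v p.1 p.2)) (a, b)).im := by
    intro a b
    rw [hp4 a b, hdq4x a b]
  have hdp4x : ∀ a b : ℝ, deriv (fun ξ => p4 ξ b) a = (1/2) * ((pdX (pdX (fun p : ℝ × ℝ => v p.1 p.2))) (a, b)).im := by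
    intro a b
    rw [show (fun ξ => p4 ξ b) = fun ξ => (1/2) * ((pdX (fun p : ℝ × ℝ => v p.1 p.2)) (ξ, b)).im from funext fun ξ => hp4' ξ b]
    exact (((hasDerivAt_px (hVxC.differentiable one_ne_zero (a, b))).cimag).const_mul (1/2)).deriv
  have hdq4t : ∀ a b : ℝ, deriv (fun τ => q4 a τ) b = ((pdT (fun p : ℝ × ℝ => v p.1 p.2)) (a, b)).im := by
    intro a b
    rw [show (fun τ => q4 a τ) = fun τ => ((v a τ).im) from funext fun τ => hq4 a τ]
    exact ((hasDerivAt_pt (hVd (a, b))).cimag).deriv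
  have hdp4t : ∀ a b : ℝ, deriv (fun τ => p4 a τ) b = (1/2) * ((pdT (pdX (fun p : ℝ × ℝ => v p.1 p.2))) (a, b)).im := by
    intro a b
    rw [show (fun τ => p4 a τ) = fun τ => (1/2) * ((pdX (fun p : ℝ × ℝ => v p.1 p.2)) (a, τ)).im from funext fun τ => hp4' a τ]
    exact (((hasDerivAt_pt (hVxC.differentiable one_ne_zero (a, b))).cimag).const_mul (1/2)).deriv
  have hfunE : (fun τ => E x τ) = (fun τ => -(1/4) * ((u x τ).re ^ 2 + (u x τ).im ^ 2) ^ 2 - (1/4) * ((v x τ).re ^ 2 + (v x τ).im ^ 2) ^ 2 - (1/2) * β * ((u x τ).re ^ 2 + (u x τ).im ^ 2) * ((v x τ).re ^ 2 + (v x τ).im ^ 2) - (((1/2) * ((pdX (fun p : ℝ × ℝ => u p.1 p.2)) (x, τ)).re) ^ 2 + ((1/2) * ((pdX (fun p : ℝ × ℝ => u p.1 p.2)) (x, τ)).im) ^ 2 + ((1/2) * ((pdX (fun p : ℝ × ℝ => v p.1 p.2)) (x, τ)).re) ^ 2 + ((1/2) * ((pdX (fun p : ℝ × ℝ => v p.1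 p.2)) (x, τ)).im) ^ 2) - α * ((u x τ).im * ((1/2) * ((pdX (fun p : ℝ × ℝ => u p.1 p.2)) (x, τ)).re) - (u x τ).re * ((1/2) * ((pdX (fun p : ℝ × ℝ => u p.1 p.2)) (x, τ)).im) + (v x τ).re * ((1/2) * ((pdX (fun p : ℝ × ℝ => v p.1 p.2)) (x, τ)).im) - (v x τ).im * ((1/2) * ((pdX (fun p : ℝ × ℝ => v p.1 p.2)) (x, τ)).re)) - (1/2) * (((u x τ).re * ((1/2) * ((pdX (pdX (fun p : ℝ × ℝ => u p.1 p.2))) (x, τ)).re) - 2 * ((1/2) * ((pdX (fun p : ℝ × ℝ => u p.1 p.2)) (x, τ)).re) ^ 2) + ((u x τ).im * ((1/2) * ((pdX (pdX (fun p : ℝ × ℝ => u p.1 p.2))) (x, τ)).im) - 2 * ((1/2) * ((pdX (fun p : ℝ × ℝ => u p.1 p.2)) (x, τ)).im) ^ 2) + ((v x τ).re * ((1/2) * ((pdX (pdX (fun p : ℝ × ℝ => v p.1 p.2))) (x, τ)).re) - 2 * ((1/2) * ((pdX (fun p : ℝ × ℝ => v p.1 p.2)) (x, τ)).re) ^ 2)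 + ((v x τ).im * ((1/2) * ((pdX (pdX (fun p : ℝ × ℝ => v p.1 p.2))) (x, τ)).im) - 2 * ((1/2) * ((pdX (fun p : ℝ × ℝ => v p.1 p.2)) (x, τ)).im) ^ 2))) := by
    funext τ
    rw [hE x τ, hS x τ]
    rw [hdp1x x τ, hdp2x x τ, hdp3x x τ, hdp4x x τ]
    rw [hp1' x τ, hp2' x τ, hp3' x τ, hp4' x τ]
    rw [hq1 x τ, hq2 x τ, hq3 x τ, hq4 x τ]
  have hfunF : (fun ξ => F ξ t) = (fun ξ => (1/2) * (α * ((u ξ t).im * ((pdT (fun p : ℝ × ℝ => u p.1 p.2)) (ξ, t)).re - (u ξ t).re * ((pdT (fun p : ℝ × ℝ => u p.1 p.2)) (ξ, t)).im + (v ξ t).re * ((pdT (fun p : ℝ × ℝ => v p.1 p.2)) (ξ, t)).im - (v ξ t).im * ((pdT (fun p : ℝ × ℝ => v p.1 p.2)) (ξ, t)).re) + (((u ξ t).re * ((1/2) * ((pdT (pdX (fun p : ℝ × ℝ => u p.1 p.2))) (ξ, t)).re) - ((1/2) * ((pdX (fun p : ℝ × ℝ => u p.1 p.2)) (ξ, t)).re)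 * ((pdT (fun p : ℝ × ℝ => u p.1 p.2)) (ξ, t)).re) + ((u ξ t).im * ((1/2) * ((pdT (pdX (fun p : ℝ × ℝ => u p.1 p.2))) (ξ, t)).im) - ((1/2) * ((pdX (fun p : ℝ × ℝ => u p.1 p.2)) (ξ, t)).im) * ((pdT (fun p : ℝ × ℝ => u p.1 p.2)) (ξ, t)).im) + ((v ξ t).re * ((1/2) * ((pdT (pdX (fun p : ℝ × ℝ => v p.1 p.2))) (ξ, t)).re) - ((1/2) * ((pdX (fun p : ℝ × ℝ => v p.1 p.2)) (ξ, t)).re) * ((pdT (fun p : ℝ × ℝ => v p.1 p.2)) (ξ, t)).re) + ((v ξ t).im * ((1/2) * ((pdT (pdX (fun p : ℝ × ℝ => v p.1 p.2))) (ξ, t)).im) - ((1/2) * ((pdX (fun p : ℝ × ℝ => v p.1 p.2)) (ξ, t)).im) * ((pdT (fun p : ℝ × ℝ => v p.1 p.2)) (ξ, t)).im)))) := by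
    funext ξ
    rw [hF ξ t]
    rw [hdq1t ξ t, hdq2t ξ t, hdq3t ξ t, hdq4t ξ t]
    rw [hdp1t ξ t, hdp2t ξ t, hdp3t ξ t, hdp4t ξ t]
    rw [hp1' ξ t, hp2' ξ t, hp3' ξ t, hp4' ξ t]
    rw [hq1 ξ t, hq2 ξ t, hq3 ξ t, hq4 ξ t]
  -- atoms for the t-derivative of E
  have eu : HasDerivAt (fun τ => u x τ) ((pdT (fun p : ℝ × ℝ => u p.1 p.2)) (x, t)) t := hasDerivAt_pt (hUd (x, t))
  have ev : HasDerivAt (fun τ => v x τ) ((pdT (fun p : ℝ × ℝ => v p.1 p.2)) (x, t)) t := hasDerivAt_pt (hVd (x, t))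
  have eux : HasDerivAt (fun τ => (pdX (fun p : ℝ × ℝ => u p.1 p.2)) (x, τ)) ((pdT (pdX (fun p : ℝ × ℝ => u p.1 p.2))) (x, t)) t :=
    hasDerivAt_pt (hUxC.differentiable one_ne_zero (x, t))
  have evx : HasDerivAt (fun τ => (pdX (fun p : ℝ × ℝ => v p.1 p.2)) (x, τ)) ((pdT (pdX (fun p : ℝ × ℝ => v p.1 p.2))) (x, t)) t :=
    hasDerivAt_pt (hVxC.differentiable one_ne_zero (x, t))
  have euxx : HasDerivAt (fun τ => (pdX (pdX (fun p : ℝ × ℝ => u p.1 p.2))) (x, τ)) ((pdT (pdX (pdX (fun p : ℝ × ℝ => u p.1 p.2)))) (x, t)) t :=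
    hasDerivAt_pt (hUxxC.differentiable one_ne_zero (x, t))
  have evxx : HasDerivAt (fun τ => (pdX (pdX (fun p : ℝ × ℝ => v p.1 p.2))) (x, τ)) ((pdT (pdX (pdX (fun p : ℝ × ℝ => v p.1 p.2)))) (x, t)) t :=
    hasDerivAt_pt (hVxxC.differentiable one_ne_zero (x, t))
  have pe1 := (eux.creal).const_mul ((1:ℝ)/2)
  have pe2 := (eux.cimag).const_mul ((1:ℝ)/2)
  have pe3 := (evx.creal).const_mul ((1:ℝ)/2)
  have pe4 := (evx.cimag).const_mul ((1:ℝ)/2)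
  have dpe1 := (euxx.creal).const_mul ((1:ℝ)/2)
  have dpe2 := (euxx.cimag).const_mul ((1:ℝ)/2)
  have dpe3 := (evxx.creal).const_mul ((1:ℝ)/2)
  have dpe4 := (evxx.cimag).const_mul ((1:ℝ)/2)
  have hDE : HasDerivAt (fun τ => -(1/4) * ((u x τ).re ^ 2 + (u x τ).im ^ 2) ^ 2 - (1/4) * ((v x τ).re ^ 2 + (v x τ).im ^ 2) ^ 2 - (1/2) * β * ((u x τ).re ^ 2 + (u x τ).im ^ 2) * ((v x τ).re ^ 2 + (v x τ).im ^ 2) - (((1/2) * ((pdX (fun p : ℝ × ℝ => u p.1 p.2)) (x, τ)).re) ^ 2 + ((1/2) * ((pdX (fun p : ℝ × ℝ => u p.1 p.2)) (x, τ)).im) ^ 2 + ((1/2) * ((pdX (fun p : ℝ × ℝ => v p.1 p.2)) (x, τ)).re) ^ 2 + ((1/2) * ((pdX (fun p : ℝ × ℝ => v p.1 p.2)) (x, τ)).im) ^ 2) - α * ((u x τ).im * ((1/2) * ((pdX (fun p : ℝ × ℝ => u p.1 p.2)) (x, τ)).re) - (u x τ).re * ((1/2) * ((pdX (fun p : ℝ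 × ℝ => u p.1 p.2)) (x, τ)).im) + (v x τ).re * ((1/2) * ((pdX (fun p : ℝ × ℝ => v p.1 p.2)) (x, τ)).im) - (v x τ).im * ((1/2) * ((pdX (fun p : ℝ × ℝ => v p.1 p.2)) (x, τ)).re)) - (1/2) * (((u x τ).re * ((1/2) * ((pdX (pdX (fun p : ℝ × ℝ => u p.1 p.2))) (x, τ)).re) - 2 * ((1/2) * ((pdX (fun p : ℝ × ℝ => u p.1 p.2)) (x, τ)).re) ^ 2) + ((u x τ).im * ((1/2) * ((pdX (pdX (fun p : ℝ × ℝ => u p.1 p.2))) (x, τ)).im) - 2 * ((1/2) * ((pdX (fun p : ℝ × ℝ => u p.1 p.2)) (x, τ)).im) ^ 2) + ((v x τ).re * ((1/2) * ((pdX (pdX (fun p : ℝ × ℝ => v p.1 p.2))) (x, τ)).re) - 2 * ((1/2) * ((pdX (fun p : ℝ × ℝ => v p.1 p.2)) (x, τ)).re) ^ 2) + ((v x τ).im * ((1/2) * ((pdX (pdX (fun p : ℝ × ℝ => v p.1 p.2))) (x, τ)).im) - 2 * ((1/2) * ((pdX (fun p : ℝ × ℝ => v p.1 p.2)) (x, τ)).im)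 ^ 2))) ((-1) * (u x t).re * (u x t).re * (u x t).re * ((pdT (fun p : ℝ × ℝ => u p.1 p.2)) (x, t)).re + (-1) * (u x t).re * (u x t).re * (u x t).im * ((pdT (fun p : ℝ × ℝ => u p.1 p.2)) (x, t)).im + (-1) * (u x t).re * (u x t).re * (v x t).re * β * ((pdT (fun p : ℝ × ℝ => v p.1 p.2)) (x, t)).re + (-1) * (u x t).re * (u x t).re * (v x t).im * β * ((pdT (fun p : ℝ × ℝ => v p.1 p.2)) (x, t)).im + (-1) * (u x t).re * (u x t).im * (u x t).im * ((pdT (fun p : ℝ × ℝ => u p.1 p.2)) (x, t)).re + (-1) * (u x t).re * (v x t).re * (v x t).re * β * ((pdT (fun p : ℝ × ℝ => u p.1 p.2)) (x, t)).re + (-1) * (u x t).re * (v x t).im * (v x t).im * β * ((pdT (fun p : ℝ × ℝ => u p.1 p.2)) (x, t)).re + (1/2) * (u x t).re * α * ((pdX (pdT (fun p : ℝ × ℝ => u p.1 p.2))) (x, t)).im + (-1/4) * (u x t).re * ((pdT (pdX (pdX (fun p : ℝ × ℝ => u p.1 p.2)))) (x, t)).re + (-1) * (u x t).im * (u x t).im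 * (u x t).im * ((pdT (fun p : ℝ × ℝ => u p.1 p.2)) (x, t)).im + (-1) * (u x t).im * (u x t).im * (v x t).re * β * ((pdT (fun p : ℝ × ℝ => v p.1 p.2)) (x, t)).re + (-1) * (u x t).im * (u x t).im * (v x t).im * β * ((pdT (fun p : ℝ × ℝ => v p.1 p.2)) (x, t)).im + (-1) * (u x t).im * (v x t).re * (v x t).re * β * ((pdT (fun p : ℝ × ℝ => u p.1 p.2)) (x, t)).im + (-1) * (u x t).im * (v x t).im * (v x t).im * β * ((pdT (fun p : ℝ × ℝ => u p.1 p.2)) (x, t)).im + (-1/2) * (u x t).im * α * ((pdX (pdT (fun p : ℝ × ℝ => u p.1 p.2))) (x, t)).re + (-1/4) * (u x t).im * ((pdT (pdX (pdX (fun p : ℝ × ℝ => u p.1 p.2)))) (x, t)).im + (-1) * (v x t).re * (v x t).re * (v x t).re * ((pdT (fun p : ℝ × ℝ => v p.1 p.2)) (x, t)).re + (-1) * (v x t).re * (v x t).re * (v x t).im * ((pdT (fun p : ℝ × ℝ => v p.1 p.2)) (x, t)).im + (-1) * (v x t).re * (v x t).im * (v x t).im * ((pdT (fun p : ℝ ×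 ℝ => v p.1 p.2)) (x, t)).re + (-1/2) * (v x t).re * α * ((pdX (pdT (fun p : ℝ × ℝ => v p.1 p.2))) (x, t)).im + (-1/4) * (v x t).re * ((pdT (pdX (pdX (fun p : ℝ × ℝ => v p.1 p.2)))) (x, t)).re + (-1) * (v x t).im * (v x t).im * (v x t).im * ((pdT (fun p : ℝ × ℝ => v p.1 p.2)) (x, t)).im + (1/2) * (v x t).im * α * ((pdX (pdT (fun p : ℝ × ℝ => v p.1 p.2))) (x, t)).re + (-1/4) * (v x t).im * ((pdT (pdX (pdX (fun p : ℝ × ℝ => v p.1 p.2)))) (x, t)).im + (1/2) * α * ((pdT (fun p : ℝ × ℝ => u p.1 p.2)) (x, t)).re * ((pdX (fun p : ℝ × ℝ => u p.1 p.2)) (x, t)).im + (-1/2) * α * ((pdT (fun p : ℝ × ℝ => u p.1 p.2)) (x, t)).im * ((pdX (fun p : ℝ × ℝ => u p.1 p.2)) (x, t)).re + (-1/2) * α * ((pdT (fun p : ℝ × ℝ => v p.1 p.2)) (x, t)).re * ((pdX (fun p : ℝ × ℝ => v p.1 p.2)) (x, t)).im + (1/2) * α * ((pdT (fun p : ℝ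 × ℝ => v p.1 p.2)) (x, t)).im * ((pdX (fun p : ℝ × ℝ => v p.1 p.2)) (x, t)).re + (-1/4) * ((pdX (pdX (fun p : ℝ × ℝ => u p.1 p.2))) (x, t)).re * ((pdT (fun p : ℝ × ℝ => u p.1 p.2)) (x, t)).re + (-1/4) * ((pdX (pdX (fun p : ℝ × ℝ => u p.1 p.2))) (x, t)).im * ((pdT (fun p : ℝ × ℝ => u p.1 p.2)) (x, t)).im + (-1/4) * ((pdX (pdX (fun p : ℝ × ℝ => v p.1 p.2))) (x, t)).re * ((pdT (fun p : ℝ × ℝ => v p.1 p.2)) (x, t)).re + (-1/4) * ((pdX (pdX (fun p : ℝ × ℝ => v p.1 p.2))) (x, t)).im * ((pdT (fun p : ℝ × ℝ => v p.1 p.2)) (x, t)).im) t := by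
    have h :=
      ((((((((eu.creal.pow 2).add (eu.cimag.pow 2)).pow 2).const_mul (-(1/4) : ℝ)).sub
          ((((ev.creal.pow 2).add (ev.cimag.pow 2)).pow 2).const_mul ((1/4) : ℝ))).sub
          (((((eu.creal.pow 2).add (eu.cimag.pow 2)).const_mul ((1/2) * β)).mul
            ((ev.creal.pow 2).add (ev.cimag.pow 2))))).sub
          ((((pe1.pow 2).add (pe2.pow 2)).add (pe3.pow 2)).add (pe4.pow 2))).sub
        (((((eu.cimag.mul pe1).sub (eu.creal.mul pe2)).add (ev.creal.mul pe4)).sub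
          (ev.cimag.mul pe3)).const_mul α)).sub
        ((((((eu.creal.mul dpe1).sub ((pe1.pow 2).const_mul (2:ℝ))).add
            ((eu.cimag.mul dpe2).sub ((pe2.pow 2).const_mul (2:ℝ)))).add
            ((ev.creal.mul dpe3).sub ((pe3.pow 2).const_mul (2:ℝ)))).add
            ((ev.cimag.mul dpe4).sub ((pe4.pow 2).const_mul (2:ℝ)))).const_mul ((1:ℝ)/2))
    refine h.congr_deriv ?_
    rw [hsymU, hsymV]
    beta_reduce
    simp only [Nat.cast_ofNat, Nat.reduceSub, pow_one, Pi.add_apply, Pi.pow_apply]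
    ring
  -- atoms for the x-derivative of F
  have fu : HasDerivAt (fun ξ => u ξ t) ((pdX (fun p : ℝ × ℝ => u p.1 p.2)) (x, t)) x := hasDerivAt_px (hUd (x, t))
  have fv : HasDerivAt (fun ξ => v ξ t) ((pdX (fun p : ℝ × ℝ => v p.1 p.2)) (x, t)) x := hasDerivAt_px (hVd (x, t))
  have fut : HasDerivAt (fun ξ => (pdT (fun p : ℝ × ℝ => u p.1 p.2)) (ξ, t)) ((pdX (pdT (fun p : ℝ × ℝ => u p.1 p.2))) (x, t)) x :=
    hasDerivAt_px (hUtC.differentiable one_ne_zero (x, t))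
  have fvt : HasDerivAt (fun ξ => (pdT (fun p : ℝ × ℝ => v p.1 p.2)) (ξ, t)) ((pdX (pdT (fun p : ℝ × ℝ => v p.1 p.2))) (x, t)) x :=
    hasDerivAt_px (hVtC.differentiable one_ne_zero (x, t))
  have fux : HasDerivAt (fun ξ => (pdX (fun p : ℝ × ℝ => u p.1 p.2)) (ξ, t)) ((pdX (pdX (fun p : ℝ × ℝ => u p.1 p.2))) (x, t)) x :=
    hasDerivAt_px (hUxC.differentiable one_ne_zero (x, t))
  have fvx : HasDerivAt (fun ξ => (pdX (fun p : ℝ × ℝ => v p.1 p.2)) (ξ, t)) ((pdX (pdX (fun p : ℝ × ℝ => v p.1 p.2))) (x, t)) x :=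
    hasDerivAt_px (hVxC.differentiable one_ne_zero (x, t))
  have pf1 := (fux.creal).const_mul ((1:ℝ)/2)
  have pf2 := (fux.cimag).const_mul ((1:ℝ)/2)
  have pf3 := (fvx.creal).const_mul ((1:ℝ)/2)
  have pf4 := (fvx.cimag).const_mul ((1:ℝ)/2)
  have dtf1 := (fuxtC.creal).const_mul ((1:ℝ)/2)
  have dtf2 := (fuxtC.cimag).const_mul ((1:ℝ)/2)
  have dtf3 := (fvxtC.creal).const_mul ((1:ℝ)/2)
  have dtf4 := (fvxtC.cimag).const_mul ((1:ℝ)/2)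
  have hDF : HasDerivAt (fun ξ => (1/2) * (α * ((u ξ t).im * ((pdT (fun p : ℝ × ℝ => u p.1 p.2)) (ξ, t)).re - (u ξ t).re * ((pdT (fun p : ℝ × ℝ => u p.1 p.2)) (ξ, t)).im + (v ξ t).re * ((pdT (fun p : ℝ × ℝ => v p.1 p.2)) (ξ, t)).im - (v ξ t).im * ((pdT (fun p : ℝ × ℝ => v p.1 p.2)) (ξ, t)).re) + (((u ξ t).re * ((1/2) * ((pdT (pdX (fun p : ℝ × ℝ => u p.1 p.2))) (ξ, t)).re) - ((1/2) * ((pdX (fun p : ℝ × ℝ => u p.1 p.2)) (ξ, t)).re) * ((pdT (fun p : ℝ × ℝ => u p.1 p.2)) (ξ, t)).re) + ((u ξ t).im * ((1/2) * ((pdT (pdX (fun p : ℝ × ℝ => u p.1 p.2))) (ξ, t)).im) - ((1/2) * ((pdX (fun p : ℝ × ℝ => u p.1 p.2)) (ξ, t)).im) * ((pdT (fun p : ℝ × ℝ => u p.1 p.2)) (ξ, t)).im) + ((v ξ t).re * ((1/2) * ((pdT (pdX (fun p : ℝ × ℝ => v p.1 p.2))) (ξ, t)).re) - ((1/2) * ((pdX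 (fun p : ℝ × ℝ => v p.1 p.2)) (ξ, t)).re) * ((pdT (fun p : ℝ × ℝ => v p.1 p.2)) (ξ, t)).re) + ((v ξ t).im * ((1/2) * ((pdT (pdX (fun p : ℝ × ℝ => v p.1 p.2))) (ξ, t)).im) - ((1/2) * ((pdX (fun p : ℝ × ℝ => v p.1 p.2)) (ξ, t)).im) * ((pdT (fun p : ℝ × ℝ => v p.1 p.2)) (ξ, t)).im)))) ((-1/2) * (u x t).re * α * ((pdX (pdT (fun p : ℝ × ℝ => u p.1 p.2))) (x, t)).im + (1/4) * (u x t).re * ((pdT (pdX (pdX (fun p : ℝ × ℝ => u p.1 p.2)))) (x, t)).re + (1/2) * (u x t).im * α * ((pdX (pdT (fun p : ℝ × ℝ => u p.1 p.2))) (x, t)).re + (1/4) * (u x t).im * ((pdT (pdX (pdX (fun p : ℝ × ℝ => u p.1 p.2)))) (x, t)).im + (1/2) * (v x t).re * α * ((pdX (pdT (fun p : ℝ × ℝ => v p.1 p.2))) (x, t)).im + (1/4) * (v x t).re * ((pdT (pdX (pdX (fun p : ℝ × ℝ => v p.1 p.2)))) (x, t)).re + (-1/2) * (v x t).im * α * ((pdX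 (pdT (fun p : ℝ × ℝ => v p.1 p.2))) (x, t)).re + (1/4) * (v x t).im * ((pdT (pdX (pdX (fun p : ℝ × ℝ => v p.1 p.2)))) (x, t)).im + (1/2) * α * ((pdT (fun p : ℝ × ℝ => u p.1 p.2)) (x, t)).re * ((pdX (fun p : ℝ × ℝ => u p.1 p.2)) (x, t)).im + (-1/2) * α * ((pdT (fun p : ℝ × ℝ => u p.1 p.2)) (x, t)).im * ((pdX (fun p : ℝ × ℝ => u p.1 p.2)) (x, t)).re + (-1/2) * α * ((pdT (fun p : ℝ × ℝ => v p.1 p.2)) (x, t)).re * ((pdX (fun p : ℝ × ℝ => v p.1 p.2)) (x, t)).im + (1/2) * α * ((pdT (fun p : ℝ × ℝ => v p.1 p.2)) (x, t)).im * ((pdX (fun p : ℝ × ℝ => v p.1 p.2)) (x, t)).re + (-1/4) * ((pdX (pdX (fun p : ℝ × ℝ => u p.1 p.2))) (x, t)).re * ((pdT (fun p : ℝ × ℝ => u p.1 p.2)) (x, t)).re + (-1/4) * ((pdX (pdX (fun p : ℝ × ℝ => u p.1 p.2))) (x, t)).im * ((pdT (fun p : ℝ × ℝ => u p.1 p.2))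 (x, t)).im + (-1/4) * ((pdX (pdX (fun p : ℝ × ℝ => v p.1 p.2))) (x, t)).re * ((pdT (fun p : ℝ × ℝ => v p.1 p.2)) (x, t)).re + (-1/4) * ((pdX (pdX (fun p : ℝ × ℝ => v p.1 p.2))) (x, t)).im * ((pdT (fun p : ℝ × ℝ => v p.1 p.2)) (x, t)).im) x := by
    have h :=
      (((((((fu.cimag.mul fut.creal).sub (fu.creal.mul fut.cimag)).add
          (fv.creal.mul fvt.cimag)).sub (fv.cimag.mul fvt.creal)).const_mul α).add
        (((((fu.creal.mul dtf1).sub (pf1.mul fut.creal)).add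
           ((fu.cimag.mul dtf2).sub (pf2.mul fut.cimag))).add
           ((fv.creal.mul dtf3).sub (pf3.mul fvt.creal))).add
           ((fv.cimag.mul dtf4).sub (pf4.mul fvt.cimag)))).const_mul ((1:ℝ)/2))
    refine h.congr_deriv ?_
    rw [hsymU, hsymV]
    beta_reduce
    ring
  have e1 : ((pdX (pdX (fun p : ℝ × ℝ => u p.1 p.2))) (x, t)).re = 2 * ((pdT (fun p : ℝ × ℝ => u p.1 p.2)) (x, t)).im + 2 * α * ((pdX (fun p : ℝ × ℝ => u p.1 p.2)) (x, t)).im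
      - 2 * (((u x t).re^2 + (u x t).im^2) + β * ((v x t).re^2 + (v x t).im^2)) * (u x t).re := by
    have h := congrArg Complex.re (hpdeCu x t)
    simp only [Complex.add_re, Complex.sub_re, Complex.neg_re, Complex.mul_re, Complex.mul_im,
      Complex.add_im, Complex.sub_im, Complex.neg_im, Complex.I_re, Complex.I_im,
      Complex.ofReal_re, Complex.ofReal_im, Complex.conj_re, Complex.conj_im,
      Complex.re_ofNat, Complex.im_ofNat] at h
    linear_combination h
  have e2 : ((pdX (pdX (fun p : ℝ × ℝ => u p.1 p.2))) (x, t)).im = -2 * ((pdT (fun p : ℝ × ℝ => u p.1 p.2)) (x, t)).re - 2 * α * ((pdX (fun p : ℝ × ℝ => u p.1 p.2)) (x, t)).re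
      - 2 * (((u x t).re^2 + (u x t).im^2) + β * ((v x t).re^2 + (v x t).im^2)) * (u x t).im := by
    have h := congrArg Complex.im (hpdeCu x t)
    simp only [Complex.add_re, Complex.sub_re, Complex.neg_re, Complex.mul_re, Complex.mul_im,
      Complex.add_im, Complex.sub_im, Complex.neg_im, Complex.I_re, Complex.I_im,
      Complex.ofReal_re, Complex.ofReal_im, Complex.conj_re, Complex.conj_im,
      Complex.re_ofNat, Complex.im_ofNat] at h
    linear_combination h
  have e3 : ((pdX (pdX (fun p : ℝ × ℝ => v p.1 p.2))) (x, t)).re = 2 * ((pdT (fun p : ℝ × ℝ => v p.1 p.2)) (x, t)).im - 2 * α * ((pdX (fun p : ℝ × ℝ => v p.1 p.2)) (x, t)).im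
      - 2 * (β * ((u x t).re^2 + (u x t).im^2) + ((v x t).re^2 + (v x t).im^2)) * (v x t).re := by
    have h := congrArg Complex.re (hpdeCv x t)
    simp only [Complex.add_re, Complex.sub_re, Complex.neg_re, Complex.mul_re, Complex.mul_im,
      Complex.add_im, Complex.sub_im, Complex.neg_im, Complex.I_re, Complex.I_im,
      Complex.ofReal_re, Complex.ofReal_im, Complex.conj_re, Complex.conj_im,
      Complex.re_ofNat, Complex.im_ofNat] at h
    linear_combination h
  have e4 : ((pdX (pdX (fun p : ℝ × ℝ => v p.1 p.2))) (x, t)).im = -2 * ((pdT (fun p : ℝ × ℝ => v p.1 p.2)) (x, t)).re + 2 * α * ((pdX (fun p : ℝ × ℝ => v p.1 p.2)) (x, t)).re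
      - 2 * (β * ((u x t).re^2 + (u x t).im^2) + ((v x t).re^2 + (v x t).im^2)) * (v x t).im := by
    have h := congrArg Complex.im (hpdeCv x t)
    simp only [Complex.add_re, Complex.sub_re, Complex.neg_re, Complex.mul_re, Complex.mul_im,
      Complex.add_im, Complex.sub_im, Complex.neg_im, Complex.I_re, Complex.I_im,
      Complex.ofReal_re, Complex.ofReal_im, Complex.conj_re, Complex.conj_im,
      Complex.re_ofNat, Complex.im_ofNat] at h
    linear_combination h
  rw [hfunE, hfunF, hDE.deriv, hDF.deriv]
  linear_combination (-(1/2) * ((pdT (fun p : ℝ × ℝ => u p.1 p.2)) (x, t)).re) * e1 + (-(1/2) * ((pdT (fun p : ℝ × ℝ => u p.1 p.2)) (x, t)).im) * e2 + (-(1/2) * ((pdT (fun p : ℝ × ℝ => v p.1 p.2)) (x, t)).re) * e3 + (-(1/2) * ((pdT (fun p : ℝ × ℝ => v p.1 p.2)) (x, t)).im) * e4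
end
end

section
/- (Local momentum conservation law of the coupled nonlinear Schrödinger equations) Let α, β ∈ ℝ and let u, v : ℝ × ℝ → ℂ, (x,t) ↦ u(x,t), v(x,t), be twice continuously differentiable solutions of i u_t + i α u_x + (1/2) u_xx + (|u|² + β|v|²) u = 0 and i v_t − i α v_x + (1/2) v_xx + (β|u|² + |v|²) v = 0. Write u = q₁ + i q₂, v = q₃ + i q₄ with q₁, q₂, q₃, q₄ real, and set p_i = (1/2) ∂_x q_i for i = 1,2,3,4, S = −(1/4)(q₁²+q₂²)² − (1/4)(q₃²+q₄²)² − (1/2) β (q₁²+q₂²)(q₃²+q₄²) − (p₁²+p₂²+p₃²+p₄²), I = q₂p₁ − q₁p₂ + q₄p₃ − q₃p₄, and G = S − (1/2)(q₂∂_t q₁ − q₁∂_t q₂ + q₄∂_t q₃ − q₃∂_t q₄). Then ∂_t I + ∂_x G = 0 everywhere. -/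
open scoped Matrix

noncomputable section

private lemma hasDerivAt_slice1 {g : ℝ × ℝ → ℂ} {x t : ℝ} (hg : DifferentiableAt ℝ g (x, t)) :
    HasDerivAt (fun ξ => g (ξ, t)) (fderiv ℝ g (x, t) (1, 0)) x :=
  hg.hasFDerivAt.comp_hasDerivAt x ((hasDerivAt_id x).prodMk (hasDerivAt_const x t))

private lemma hasDerivAt_slice2 {g : ℝ × ℝ → ℂ} {x t : ℝ} (hg : DifferentiableAt ℝ g (x, t)) :
    HasDerivAt (fun τ => g (x, τ)) (fderiv ℝ g (x, t) (0, 1)) t :=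
  hg.hasFDerivAt.comp_hasDerivAt t ((hasDerivAt_const t x).prodMk (hasDerivAt_id t))

private lemma contDiff_apply_fderiv {g : ℝ × ℝ → ℂ} (hg : ContDiff ℝ 2 g) (w : ℝ × ℝ) :
    ContDiff ℝ 1 (fun p => fderiv ℝ g p w) :=
  (ContinuousLinearMap.apply ℝ ℂ w).contDiff.comp (hg.fderiv_right (le_refl 2))

private lemma fderiv_apply_fderiv {g : ℝ × ℝ → ℂ} (hg : ContDiff ℝ 2 g) (pt : ℝ × ℝ)
    (v w : ℝ × ℝ) :
    fderiv ℝ (fun p => fderiv ℝ g p v) pt w = fderiv ℝ (fderiv ℝ g) pt w v := by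
  have hd : DifferentiableAt ℝ (fderiv ℝ g) pt :=
    ((hg.fderiv_right (m := 1) (le_refl 2)).differentiable one_ne_zero) pt
  have h2 : HasFDerivAt (fun p => fderiv ℝ g p v)
      ((ContinuousLinearMap.apply ℝ ℂ v).comp (fderiv ℝ (fderiv ℝ g) pt)) pt :=
    ((ContinuousLinearMap.apply ℝ ℂ v).hasFDerivAt).comp pt hd.hasFDerivAt
  rw [h2.fderiv]; rfl

private lemma mixed_symm {g : ℝ × ℝ → ℂ} (hg : ContDiff ℝ 2 g) (pt : ℝ × ℝ) :
    fderiv ℝ (fun p => fderiv ℝ g p (1, 0)) pt (0, 1)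
      = fderiv ℝ (fun p => fderiv ℝ g p (0, 1)) pt (1, 0) := by
  rw [fderiv_apply_fderiv hg, fderiv_apply_fderiv hg]
  exact (hg.contDiffAt.isSymmSndFDerivAt (by simp)) _ _

private lemma pack {f : ℝ → ℝ → ℂ} (hf : ContDiff ℝ 2 (fun p : ℝ × ℝ => f p.1 p.2)) :
    ∃ fx ft fxx fxt : ℝ → ℝ → ℂ,
      (∀ a b, HasDerivAt (fun ξ => f ξ b) (fx a b) a) ∧
      (∀ a b, HasDerivAt (fun τ => f a τ) (ft a b) b) ∧
      (∀ a b, HasDerivAt (fun ξ => fx ξ b) (fxx a b) a) ∧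
      (∀ a b, HasDerivAt (fun τ => fx a τ) (fxt a b) b) ∧
      (∀ a b, HasDerivAt (fun ξ => ft ξ b) (fxt a b) a) := by
  set F : ℝ × ℝ → ℂ := fun p => f p.1 p.2 with hF
  have hFd : Differentiable ℝ F := hf.differentiable two_ne_zero
  have hDX : Differentiable ℝ (fun p => fderiv ℝ F p (1, 0)) :=
    (contDiff_apply_fderiv hf (1, 0)).differentiable one_ne_zero
  have hDT : Differentiable ℝ (fun p => fderiv ℝ F p (0, 1)) :=
    (contDiff_apply_fderiv hf (0, 1)).differentiable one_ne_zero
  refine ⟨fun a b => fderiv ℝ F (a, b) (1, 0), fun a b => fderiv ℝ F (a, b) (0, 1),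
    fun a b => fderiv ℝ (fun p => fderiv ℝ F p (1, 0)) (a, b) (1, 0),
    fun a b => fderiv ℝ (fun p => fderiv ℝ F p (1, 0)) (a, b) (0, 1),
    fun a b => hasDerivAt_slice1 (hFd (a, b)),
    fun a b => hasDerivAt_slice2 (hFd (a, b)),
    fun a b => hasDerivAt_slice1 (hDX (a, b)),
    fun a b => hasDerivAt_slice2 (hDX (a, b)),
    fun a b => ?_⟩
  have := hasDerivAt_slice1 (g := fun p => fderiv ℝ F p (0, 1)) (x := a) (t := b) (hDT (a, b))
  rwa [← mixed_symm hf (a, b)] at this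

private lemma HasDerivAt.creal_s16 {f : ℝ → ℂ} {c : ℂ} {x : ℝ} (h : HasDerivAt f c x) :
    HasDerivAt (fun y => (f y).re) c.re x :=
  Complex.reCLM.hasFDerivAt.comp_hasDerivAt x h

private lemma HasDerivAt.cimag_s16 {f : ℝ → ℂ} {c : ℂ} {x : ℝ} (h : HasDerivAt f c x) :
    HasDerivAt (fun y => (f y).im) c.im x :=
  Complex.imCLM.hasFDerivAt.comp_hasDerivAt x h

end

theorem stmt16 (α β : ℝ) (u v : ℝ → ℝ → ℂ)
    (hu : ContDiff ℝ 2 fun p : ℝ × ℝ => u p.1 p.2)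
    (hv : ContDiff ℝ 2 fun p : ℝ × ℝ => v p.1 p.2)
    (hpdeu : ∀ x t,
      Complex.I * deriv (fun τ => u x τ) t
        + Complex.I * (α : ℂ) * deriv (fun ξ => u ξ t) x
        + (1/2) * deriv (fun ξ => deriv (fun ξ' => u ξ' t) ξ) x
        + (u x t * (starRingEnd ℂ) (u x t) + (β : ℂ) * (v x t * (starRingEnd ℂ) (v x t))) * u x t
        = 0)
    (hpdev : ∀ x t,
      Complex.I * deriv (fun τ => v x τ) t
        - Complex.I * (α : ℂ) * deriv (fun ξ => v ξ t) x
        + (1/2) * deriv (fun ξ => deriv (fun ξ' => v ξ' t) ξ) x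
        + ((β : ℂ) * (u x t * (starRingEnd ℂ) (u x t)) + v x t * (starRingEnd ℂ) (v x t)) * v x t
        = 0)
    (q1 q2 q3 q4 p1 p2 p3 p4 S : ℝ → ℝ → ℝ)
    (hq1 : ∀ x t, q1 x t = (u x t).re) (hq2 : ∀ x t, q2 x t = (u x t).im)
    (hq3 : ∀ x t, q3 x t = (v x t).re) (hq4 : ∀ x t, q4 x t = (v x t).im)
    (hp1 : ∀ x t, p1 x t = (1/2) * deriv (fun ξ => q1 ξ t) x)
    (hp2 : ∀ x t, p2 x t = (1/2) * deriv (fun ξ => q2 ξ t) x)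
    (hp3 : ∀ x t, p3 x t = (1/2) * deriv (fun ξ => q3 ξ t) x)
    (hp4 : ∀ x t, p4 x t = (1/2) * deriv (fun ξ => q4 ξ t) x)
    (hS : ∀ x t, S x t = -(1/4) * (q1 x t ^ 2 + q2 x t ^ 2) ^ 2
        - (1/4) * (q3 x t ^ 2 + q4 x t ^ 2) ^ 2
        - (1/2) * β * (q1 x t ^ 2 + q2 x t ^ 2) * (q3 x t ^ 2 + q4 x t ^ 2)
        - (p1 x t ^ 2 + p2 x t ^ 2 + p3 x t ^ 2 + p4 x t ^ 2))
    (I G : ℝ → ℝ → ℝ)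
    (hI : ∀ x t, I x t = q2 x t * p1 x t - q1 x t * p2 x t
        + q4 x t * p3 x t - q3 x t * p4 x t)
    (hG : ∀ x t, G x t = S x t - (1/2) * (q2 x t * deriv (fun τ => q1 x τ) t
        - q1 x t * deriv (fun τ => q2 x τ) t
        + q4 x t * deriv (fun τ => q3 x τ) t
        - q3 x t * deriv (fun τ => q4 x τ) t)) :
    ∀ x t, deriv (fun τ => I x τ) t + deriv (fun ξ => G ξ t) x = 0 := by
  obtain ⟨ux, ut, uxx, uxt, hux, hut, huxx, huxt, hutx⟩ := pack hu
  obtain ⟨vx, vt, vxx, vxt, hvx, hvt, hvxx, hvxt, hvtx⟩ := pack hv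
  -- derivatives of the real components
  have hq1x : ∀ a b, deriv (fun ξ => q1 ξ b) a = (ux a b).re := by
    intro a b
    rw [show (fun ξ => q1 ξ b) = fun ξ => (u ξ b).re from funext fun ξ => hq1 ξ b]
    exact ((hux a b).creal_s16).deriv
  have hq2x : ∀ a b, deriv (fun ξ => q2 ξ b) a = (ux a b).im := by
    intro a b
    rw [show (fun ξ => q2 ξ b) = fun ξ => (u ξ b).im from funext fun ξ => hq2 ξ b]
    exact ((hux a b).cimag_s16).deriv
  have hq3x : ∀ a b, deriv (fun ξ => q3 ξ b) a = (vx a b).re := by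
    intro a b
    rw [show (fun ξ => q3 ξ b) = fun ξ => (v ξ b).re from funext fun ξ => hq3 ξ b]
    exact ((hvx a b).creal_s16).deriv
  have hq4x : ∀ a b, deriv (fun ξ => q4 ξ b) a = (vx a b).im := by
    intro a b
    rw [show (fun ξ => q4 ξ b) = fun ξ => (v ξ b).im from funext fun ξ => hq4 ξ b]
    exact ((hvx a b).cimag_s16).deriv
  have hq1t : ∀ a b, deriv (fun τ => q1 a τ) b = (ut a b).re := by
    intro a b
    rw [show (fun τ => q1 a τ) = fun τ => (u a τ).re from funext fun τ => hq1 a τ]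
    exact ((hut a b).creal_s16).deriv
  have hq2t : ∀ a b, deriv (fun τ => q2 a τ) b = (ut a b).im := by
    intro a b
    rw [show (fun τ => q2 a τ) = fun τ => (u a τ).im from funext fun τ => hq2 a τ]
    exact ((hut a b).cimag_s16).deriv
  have hq3t : ∀ a b, deriv (fun τ => q3 a τ) b = (vt a b).re := by
    intro a b
    rw [show (fun τ => q3 a τ) = fun τ => (v a τ).re from funext fun τ => hq3 a τ]
    exact ((hvt a b).creal_s16).deriv
  have hq4t : ∀ a b, deriv (fun τ => q4 a τ) b = (vt a b).im := by
    intro a b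
    rw [show (fun τ => q4 a τ) = fun τ => (v a τ).im from funext fun τ => hq4 a τ]
    exact ((hvt a b).cimag_s16).deriv
  have hp1' : ∀ a b, p1 a b = (1/2) * (ux a b).re := fun a b => by rw [hp1, hq1x]
  have hp2' : ∀ a b, p2 a b = (1/2) * (ux a b).im := fun a b => by rw [hp2, hq2x]
  have hp3' : ∀ a b, p3 a b = (1/2) * (vx a b).re := fun a b => by rw [hp3, hq3x]
  have hp4' : ∀ a b, p4 a b = (1/2) * (vx a b).im := fun a b => by rw [hp4, hq4x]
  intro x t
  -- translate the PDEs to the point (x, t)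
  have hpu : Complex.I * ut x t + Complex.I * (α : ℂ) * ux x t + (1/2) * uxx x t
      + (u x t * (starRingEnd ℂ) (u x t) + (β : ℂ) * (v x t * (starRingEnd ℂ) (v x t))) * u x t
      = 0 := by
    have h1 := hpdeu x t
    rw [(hut x t).deriv, (hux x t).deriv,
      show (fun ξ => deriv (fun ξ' => u ξ' t) ξ) = fun ξ => ux ξ t from
        funext fun ξ => (hux ξ t).deriv, (huxx x t).deriv] at h1
    exact h1
  have hpv : Complex.I * vt x t - Complex.I * (α : ℂ) * vx x t + (1/2) * vxx x t
      + ((β : ℂ) * (u x t * (starRingEnd ℂ) (u x t)) + v x t * (starRingEnd ℂ) (v x t)) * v x t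
      = 0 := by
    have h1 := hpdev x t
    rw [(hvt x t).deriv, (hvx x t).deriv,
      show (fun ξ => deriv (fun ξ' => v ξ' t) ξ) = fun ξ => vx ξ t from
        funext fun ξ => (hvx ξ t).deriv, (hvxx x t).deriv] at h1
    exact h1
  -- split into real and imaginary parts
  have hreu0 := congrArg Complex.re hpu
  have himu0 := congrArg Complex.im hpu
  have hrev0 := congrArg Complex.re hpv
  have himv0 := congrArg Complex.im hpv
  simp only [Complex.add_re, Complex.add_im, Complex.sub_re, Complex.sub_im,
    Complex.mul_re, Complex.mul_im, Complex.I_re, Complex.I_im, Complex.ofReal_re,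
    Complex.ofReal_im, Complex.conj_re, Complex.conj_im, Complex.zero_re, Complex.zero_im,
    Complex.div_re, Complex.div_im, Complex.one_re, Complex.one_im, Complex.normSq_apply,
    Complex.re_ofNat, Complex.im_ofNat] at hreu0 himu0 hrev0 himv0
  have Hreu : -(ut x t).im - α * (ux x t).im + (1/2) * (uxx x t).re
      + (((u x t).re^2 + (u x t).im^2) + β * ((v x t).re^2 + (v x t).im^2)) * (u x t).re = 0 := by
    linear_combination hreu0
  have Himu : (ut x t).re + α * (ux x t).re + (1/2) * (uxx x t).im
      + (((u x t).re^2 + (u x t).im^2) + β * ((v x t).re^2 + (v x t).im^2)) * (u x t).im = 0 := by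
    linear_combination himu0
  have Hrev : -(vt x t).im + α * (vx x t).im + (1/2) * (vxx x t).re
      + (β * ((u x t).re^2 + (u x t).im^2) + ((v x t).re^2 + (v x t).im^2)) * (v x t).re = 0 := by
    linear_combination hrev0
  have Himv : (vt x t).re - α * (vx x t).re + (1/2) * (vxx x t).im
      + (β * ((u x t).re^2 + (u x t).im^2) + ((v x t).re^2 + (v x t).im^2)) * (v x t).im = 0 := by
    linear_combination himv0
  -- time derivative of I
  have eI : (fun τ => I x τ) = fun τ =>
      (u x τ).im * ((1/2) * (ux x τ).re) - (u x τ).re * ((1/2) * (ux x τ).im)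
        + (v x τ).im * ((1/2) * (vx x τ).re) - (v x τ).re * ((1/2) * (vx x τ).im) := by
    funext τ
    rw [hI, hp1', hp2', hp3', hp4', hq1, hq2, hq3, hq4]
  have dI : deriv (fun τ => I x τ) t =
      ((ut x t).im * ((1/2) * (ux x t).re) + (u x t).im * ((1/2) * (uxt x t).re))
        - ((ut x t).re * ((1/2) * (ux x t).im) + (u x t).re * ((1/2) * (uxt x t).im))
        + ((vt x t).im * ((1/2) * (vx x t).re) + (v x t).im * ((1/2) * (vxt x t).re))
        - ((vt x t).re * ((1/2) * (vx x t).im) + (v x t).re * ((1/2) * (vxt x t).im)) := by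
    rw [eI]
    exact ((((hut x t).cimag_s16.mul (HasDerivAt.const_mul (1/2) (huxt x t).creal_s16)).sub
        ((hut x t).creal_s16.mul (HasDerivAt.const_mul (1/2) (huxt x t).cimag_s16))).add
        ((hvt x t).cimag_s16.mul (HasDerivAt.const_mul (1/2) (hvxt x t).creal_s16))).sub
        ((hvt x t).creal_s16.mul (HasDerivAt.const_mul (1/2) (hvxt x t).cimag_s16)) |>.deriv
  -- space derivative of G
  have eG : (fun ξ => G ξ t) = fun ξ =>
      -(1/4) * (((u ξ t).re * (u ξ t).re + (u ξ t).im * (u ξ t).im)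
          * ((u ξ t).re * (u ξ t).re + (u ξ t).im * (u ξ t).im))
        - (1/4) * (((v ξ t).re * (v ξ t).re + (v ξ t).im * (v ξ t).im)
          * ((v ξ t).re * (v ξ t).re + (v ξ t).im * (v ξ t).im))
        - (1/2) * β * ((u ξ t).re * (u ξ t).re + (u ξ t).im * (u ξ t).im)
          * ((v ξ t).re * (v ξ t).re + (v ξ t).im * (v ξ t).im)
        - ((1/2) * (ux ξ t).re * ((1/2) * (ux ξ t).re)
            + (1/2) * (ux ξ t).im * ((1/2) * (ux ξ t).im)
            + (1/2) * (vx ξ t).re * ((1/2) * (vx ξ t).re)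
            + (1/2) * (vx ξ t).im * ((1/2) * (vx ξ t).im))
        - (1/2) * ((u ξ t).im * (ut ξ t).re - (u ξ t).re * (ut ξ t).im
            + (v ξ t).im * (vt ξ t).re - (v ξ t).re * (vt ξ t).im) := by
    funext ξ
    rw [hG, hS, hq1t, hq2t, hq3t, hq4t, hp1', hp2', hp3', hp4', hq1, hq2, hq3, hq4]
    ring
  have dG : deriv (fun ξ => G ξ t) x =
      -(1/4) * ((((ux x t).re * (u x t).re + (u x t).re * (ux x t).re)
            + ((ux x t).im * (u x t).im + (u x t).im * (ux x t).im))
          * ((u x t).re * (u x t).re + (u x t).im * (u x t).im)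
        + ((u x t).re * (u x t).re + (u x t).im * (u x t).im)
          * (((ux x t).re * (u x t).re + (u x t).re * (ux x t).re)
            + ((ux x t).im * (u x t).im + (u x t).im * (ux x t).im)))
      - (1/4) * ((((vx x t).re * (v x t).re + (v x t).re * (vx x t).re)
            + ((vx x t).im * (v x t).im + (v x t).im * (vx x t).im))
          * ((v x t).re * (v x t).re + (v x t).im * (v x t).im)
        + ((v x t).re * (v x t).re + (v x t).im * (v x t).im)
          * (((vx x t).re * (v x t).re + (v x t).re * (vx x t).re)
            + ((vx x t).im * (v x t).im + (v x t).im * (vx x t).im)))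
      - ((1/2) * β * (((ux x t).re * (u x t).re + (u x t).re * (ux x t).re)
            + ((ux x t).im * (u x t).im + (u x t).im * (ux x t).im))
          * ((v x t).re * (v x t).re + (v x t).im * (v x t).im)
        + (1/2) * β * ((u x t).re * (u x t).re + (u x t).im * (u x t).im)
          * (((vx x t).re * (v x t).re + (v x t).re * (vx x t).re)
            + ((vx x t).im * (v x t).im + (v x t).im * (vx x t).im)))
      - ((1/2) * (uxx x t).re * ((1/2) * (ux x t).re)
          + (1/2) * (ux x t).re * ((1/2) * (uxx x t).re)
        + ((1/2) * (uxx x t).im * ((1/2) * (ux x t).im)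
          + (1/2) * (ux x t).im * ((1/2) * (uxx x t).im))
        + ((1/2) * (vxx x t).re * ((1/2) * (vx x t).re)
          + (1/2) * (vx x t).re * ((1/2) * (vxx x t).re))
        + ((1/2) * (vxx x t).im * ((1/2) * (vx x t).im)
          + (1/2) * (vx x t).im * ((1/2) * (vxx x t).im)))
      - (1/2) * (((ux x t).im * (ut x t).re + (u x t).im * (uxt x t).re)
          - ((ux x t).re * (ut x t).im + (u x t).re * (uxt x t).im)
        + ((vx x t).im * (vt x t).re + (v x t).im * (vxt x t).re)
        - ((vx x t).re * (vt x t).im + (v x t).re * (vxt x t).im)) := by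
    rw [eG]
    have hAu := ((hux x t).creal_s16.mul (hux x t).creal_s16).add ((hux x t).cimag_s16.mul (hux x t).cimag_s16)
    have hAv := ((hvx x t).creal_s16.mul (hvx x t).creal_s16).add ((hvx x t).cimag_s16.mul (hvx x t).cimag_s16)
    have hP := (((((HasDerivAt.const_mul ((1:ℝ)/2) (huxx x t).creal_s16).mul
          (HasDerivAt.const_mul ((1:ℝ)/2) (huxx x t).creal_s16)).add
        ((HasDerivAt.const_mul ((1:ℝ)/2) (huxx x t).cimag_s16).mul
          (HasDerivAt.const_mul ((1:ℝ)/2) (huxx x t).cimag_s16))).add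
        ((HasDerivAt.const_mul ((1:ℝ)/2) (hvxx x t).creal_s16).mul
          (HasDerivAt.const_mul ((1:ℝ)/2) (hvxx x t).creal_s16))).add
        ((HasDerivAt.const_mul ((1:ℝ)/2) (hvxx x t).cimag_s16).mul
          (HasDerivAt.const_mul ((1:ℝ)/2) (hvxx x t).cimag_s16)))
    exact (((((HasDerivAt.const_mul (-((1:ℝ)/4)) (hAu.mul hAu)).sub
        (HasDerivAt.const_mul ((1:ℝ)/4) (hAv.mul hAv))).sub
        ((HasDerivAt.const_mul (((1:ℝ)/2)*β) hAu).mul hAv)).sub hP).sub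
        (HasDerivAt.const_mul ((1:ℝ)/2) (((((hux x t).cimag_s16.mul (hutx x t).creal_s16).sub
          ((hux x t).creal_s16.mul (hutx x t).cimag_s16)).add
          ((hvx x t).cimag_s16.mul (hvtx x t).creal_s16)).sub
          ((hvx x t).creal_s16.mul (hvtx x t).cimag_s16)))) |>.deriv
  rw [dI, dG]
  linear_combination (-(ux x t).re) * Hreu + (-(ux x t).im) * Himu
    + (-(vx x t).re) * Hrev + (-(vx x t).im) * Himv
end

section
/- (Local energy conservation law of the 2D nonlinear Schrödinger equation) Let α ∈ ℝ and let V : ℝ × ℝ × ℝ → ℝ be continuously differentiable in its first argument, with V′ denoting that partial derivative. Let ψ : ℝ × ℝ × ℝ → ℂ, (x,y,t) ↦ ψ(x,y,t), be three times continuously differentiable and satisfy i ψ_t + α(ψ_xx + ψ_yy) + V′(|ψ|², x, y) ψ = 0. Write ψ = p + i q with p, q real and set v = ∂_x p, w = ∂_x q, a = ∂_y p, b = ∂_y q, E = (1/2) V(p² + q², x, y) + (α/2)(p ∂_x v + q ∂_x w + p ∂_y a + q ∂_y b), F = (α/2)(−p ∂_t v − q ∂_t w + v ∂_t p + w ∂_t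 q), G = (α/2)(−p ∂_t a − q ∂_t b + a ∂_t p + b ∂_t q). Then ∂_t E + ∂_x F + ∂_y G = 0 everywhere. -/
open scoped Matrix

noncomputable section NLSHelpers

abbrev XX := ℝ × ℝ × ℝ

variable {F' : Type*} [NormedAddCommGroup F'] [NormedSpace ℝ F']

def pd (e : XX) (f : XX → F') : XX → F' := fun z => fderiv ℝ f z e

def ee1 : XX := (1, 0, 0)
def ee2 : XX := (0, 1, 0)
def ee3 : XX := (0, 0, 1)

lemma hasDerivAt_line1 (f : XX → F') (x y t : ℝ) (hf : DifferentiableAt ℝ f (x, y, t)) :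
    HasDerivAt (fun ξ => f (ξ, y, t)) (pd ee1 f (x, y, t)) x := by
  have hL : HasDerivAt (fun ξ : ℝ => ((ξ, y, t) : XX)) ee1 x :=
    HasDerivAt.prodMk (hasDerivAt_id x) (HasDerivAt.prodMk (hasDerivAt_const x y) (hasDerivAt_const x t))
  exact hf.hasFDerivAt.comp_hasDerivAt x hL

lemma hasDerivAt_line2 (f : XX → F') (x y t : ℝ) (hf : DifferentiableAt ℝ f (x, y, t)) :
    HasDerivAt (fun η => f (x, η, t)) (pd ee2 f (x, y, t)) y := by
  have hL : HasDerivAt (fun η : ℝ => ((x, η, t) : XX)) ee2 y :=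
    HasDerivAt.prodMk (hasDerivAt_const y x) (HasDerivAt.prodMk (hasDerivAt_id y) (hasDerivAt_const y t))
  exact hf.hasFDerivAt.comp_hasDerivAt y hL

lemma hasDerivAt_line3 (f : XX → F') (x y t : ℝ) (hf : DifferentiableAt ℝ f (x, y, t)) :
    HasDerivAt (fun τ => f (x, y, τ)) (pd ee3 f (x, y, t)) t := by
  have hL : HasDerivAt (fun τ : ℝ => ((x, y, τ) : XX)) ee3 t :=
    HasDerivAt.prodMk (hasDerivAt_const t x) (HasDerivAt.prodMk (hasDerivAt_const t y) (hasDerivAt_id t))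
  exact hf.hasFDerivAt.comp_hasDerivAt t hL

lemma contDiff_pd {m n : WithTop ℕ∞} {f : XX → F'} (e : XX)
    (hf : ContDiff ℝ m f) (hmn : n + 1 ≤ m) : ContDiff ℝ n (pd e f) :=
  (hf.fderiv_right hmn).clm_apply contDiff_const

lemma pd_comm {f : XX → F'} (hf : ContDiff ℝ 2 f) (e e' z) :
    pd e (pd e' f) z = pd e' (pd e f) z := by
  have hd : DifferentiableAt ℝ (fderiv ℝ f) z :=
    ((hf.fderiv_right (le_refl ((1 : WithTop ℕ∞) + 1))).differentiable one_ne_zero) z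
  have key : ∀ a b : XX, pd a (pd b f) z = fderiv ℝ (fderiv ℝ f) z a b := by
    intro a b
    have hcomp := ((ContinuousLinearMap.apply ℝ F' b).hasFDerivAt.comp z hd.hasFDerivAt).fderiv
    show fderiv ℝ ((ContinuousLinearMap.apply ℝ F' b) ∘ fderiv ℝ f) z a = _
    rw [hcomp]
    rfl
  rw [key, key]
  exact (hf.contDiffAt.isSymmSndFDerivAt (by norm_num)) e e'

lemma pd_re {g : XX → ℂ} {z : XX} (hg : DifferentiableAt ℝ g z) (e : XX) :
    pd e (fun w => (g w).re) z = (pd e g z).re := by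
  have h := (Complex.reCLM.hasFDerivAt.comp z hg.hasFDerivAt).fderiv
  have heq : (fun w => (g w).re) = Complex.reCLM ∘ g := rfl
  rw [pd, heq, h]; rfl

lemma pd_im {g : XX → ℂ} {z : XX} (hg : DifferentiableAt ℝ g z) (e : XX) :
    pd e (fun w => (g w).im) z = (pd e g z).im := by
  have h := (Complex.imCLM.hasFDerivAt.comp z hg.hasFDerivAt).fderiv
  have heq : (fun w => (g w).im) = Complex.imCLM ∘ g := rfl
  rw [pd, heq, h]; rfl

end NLSHelpers

theorem stmt19 (α : ℝ) (V V' : ℝ → ℝ → ℝ → ℝ)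
    (hV : ∀ (ξ x y : ℝ), HasDerivAt (fun ζ => V ζ x y) (V' ξ x y) ξ)
    (hV' : ∀ x y : ℝ, Continuous fun ξ => V' ξ x y)
    (ψ : ℝ → ℝ → ℝ → ℂ)
    (hpde : ∀ x y t,
      Complex.I * deriv (fun τ => ψ x y τ) t
        + (α : ℂ) * (deriv (fun ξ => deriv (fun ξ' => ψ ξ' y t) ξ) x
          + deriv (fun η => deriv (fun η' => ψ x η' t) η) y)
        + (V' (Complex.normSq (ψ x y t)) x y : ℂ) * ψ x y t = 0)
    (p q v w a b : ℝ → ℝ → ℝ → ℝ)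
    (hp : ∀ x y t, p x y t = (ψ x y t).re) (hq : ∀ x y t, q x y t = (ψ x y t).im)
    (hv : ∀ x y t, v x y t = deriv (fun ξ => p ξ y t) x)
    (hw : ∀ x y t, w x y t = deriv (fun ξ => q ξ y t) x)
    (ha : ∀ x y t, a x y t = deriv (fun η => p x η t) y)
    (hb : ∀ x y t, b x y t = deriv (fun η => q x η t) y)
    (hψ : ContDiff ℝ 3 fun pt : ℝ × ℝ × ℝ => ψ pt.1 pt.2.1 pt.2.2)
    (E F G : ℝ → ℝ → ℝ → ℝ)
    (hE : ∀ x y t, E x y t = (1/2) * V (p x y t ^ 2 + q x y t ^ 2) x y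
        + (α/2) * (p x y t * deriv (fun ξ => v ξ y t) x
          + q x y t * deriv (fun ξ => w ξ y t) x
          + p x y t * deriv (fun η => a x η t) y
          + q x y t * deriv (fun η => b x η t) y))
    (hF : ∀ x y t, F x y t = (α/2) * (-(p x y t) * deriv (fun τ => v x y τ) t
        - q x y t * deriv (fun τ => w x y τ) t
        + v x y t * deriv (fun τ => p x y τ) t
        + w x y t * deriv (fun τ => q x y τ) t))
    (hG : ∀ x y t, G x y t = (α/2) * (-(p x y t) * deriv (fun τ => a x y τ) t
        - q x y t * deriv (fun τ => b x y τ) t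
        + a x y t * deriv (fun τ => p x y τ) t
        + b x y t * deriv (fun τ => q x y τ) t)) :
    ∀ x y t, deriv (fun τ => E x y τ) t + deriv (fun ξ => F ξ y t) x
      + deriv (fun η => G x η t) y = 0 := by
  intro x y t
  set u : XX → ℂ := fun pt : ℝ × ℝ × ℝ => ψ pt.1 pt.2.1 pt.2.2 with hudef
  have hu : ContDiff ℝ 3 u := hψ
  set P : XX → ℝ := fun w => (u w).re with hPdef
  set Q : XX → ℝ := fun w => (u w).im with hQdef
  have hP : ContDiff ℝ 3 P := Complex.reCLM.contDiff.comp hu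
  have hQ : ContDiff ℝ 3 Q := Complex.imCLM.contDiff.comp hu
  have h21 : ((2:WithTop ℕ∞) + 1 ≤ 3) := by norm_num
  have h11 : ((1:WithTop ℕ∞) + 1 ≤ 2) := by norm_num
  have hdu : Differentiable ℝ u := hu.differentiable (by norm_num)
  have hdu1 : ∀ e, Differentiable ℝ (pd e u) :=
    fun e => (contDiff_pd e hu h21).differentiable (by norm_num)
  have hpd1 : ∀ (f : XX → ℝ), ContDiff ℝ 3 f → ∀ e, ContDiff ℝ 2 (pd e f) :=
    fun f hf e => contDiff_pd e hf h21
  have hpd2 : ∀ (f : XX → ℝ), ContDiff ℝ 3 f → ∀ e e', ContDiff ℝ 1 (pd e (pd e' f)) :=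
    fun f hf e e' => contDiff_pd e (hpd1 f hf e') h11
  have hDP : Differentiable ℝ P := hP.differentiable (by norm_num)
  have hDQ : Differentiable ℝ Q := hQ.differentiable (by norm_num)
  have hDP1 : ∀ e, Differentiable ℝ (pd e P) :=
    fun e => (hpd1 P hP e).differentiable (by norm_num)
  have hDQ1 : ∀ e, Differentiable ℝ (pd e Q) :=
    fun e => (hpd1 Q hQ e).differentiable (by norm_num)
  have hDP2 : ∀ e e', Differentiable ℝ (pd e (pd e' P)) :=
    fun e e' => (hpd2 P hP e e').differentiable (by norm_num)
  have hDQ2 : ∀ e e', Differentiable ℝ (pd e (pd e' Q)) :=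
    fun e e' => (hpd2 Q hQ e e').differentiable (by norm_num)
  -- canonical forms of p, q, v, w, a, b
  have hp' : ∀ X Y T, p X Y T = P (X, Y, T) := fun X Y T => hp X Y T
  have hq' : ∀ X Y T, q X Y T = Q (X, Y, T) := fun X Y T => hq X Y T
  have hv' : ∀ X Y T, v X Y T = pd ee1 P (X, Y, T) := by
    intro X Y T
    rw [hv, show (fun ξ => p ξ Y T) = fun ξ => P (ξ, Y, T) from funext fun ξ => hp' ξ Y T]
    exact (hasDerivAt_line1 P X Y T (hDP _)).deriv
  have hw' : ∀ X Y T, w X Y T = pd ee1 Q (X, Y, T) := by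
    intro X Y T
    rw [hw, show (fun ξ => q ξ Y T) = fun ξ => Q (ξ, Y, T) from funext fun ξ => hq' ξ Y T]
    exact (hasDerivAt_line1 Q X Y T (hDQ _)).deriv
  have ha' : ∀ X Y T, a X Y T = pd ee2 P (X, Y, T) := by
    intro X Y T
    rw [ha, show (fun η => p X η T) = fun η => P (X, η, T) from funext fun η => hp' X η T]
    exact (hasDerivAt_line2 P X Y T (hDP _)).deriv
  have hb' : ∀ X Y T, b X Y T = pd ee2 Q (X, Y, T) := by
    intro X Y T
    rw [hb, show (fun η => q X η T) = fun η => Q (X, η, T) from funext fun η => hq' X η T]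
    exact (hasDerivAt_line2 Q X Y T (hDQ _)).deriv
  -- E, F, G along the lines relevant for the conclusion
  have hEline : (fun τ => E x y τ) = fun τ =>
      1/2 * V (P (x, y, τ) * P (x, y, τ) + Q (x, y, τ) * Q (x, y, τ)) x y
      + α/2 * (P (x, y, τ) * pd ee1 (pd ee1 P) (x, y, τ)
        + Q (x, y, τ) * pd ee1 (pd ee1 Q) (x, y, τ)
        + P (x, y, τ) * pd ee2 (pd ee2 P) (x, y, τ)
        + Q (x, y, τ) * pd ee2 (pd ee2 Q) (x, y, τ)) := by
    funext τ
    have d1 : deriv (fun ξ => v ξ y τ) x = pd ee1 (pd ee1 P) (x, y, τ) := by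
      rw [show (fun ξ => v ξ y τ) = fun ξ => pd ee1 P (ξ, y, τ) from
        funext fun ξ => hv' ξ y τ]
      exact (hasDerivAt_line1 (pd ee1 P) x y τ (hDP1 ee1 _)).deriv
    have d2 : deriv (fun ξ => w ξ y τ) x = pd ee1 (pd ee1 Q) (x, y, τ) := by
      rw [show (fun ξ => w ξ y τ) = fun ξ => pd ee1 Q (ξ, y, τ) from
        funext fun ξ => hw' ξ y τ]
      exact (hasDerivAt_line1 (pd ee1 Q) x y τ (hDQ1 ee1 _)).deriv
    have d3 : deriv (fun η => a x η τ) y = pd ee2 (pd ee2 P) (x, y, τ) := by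
      rw [show (fun η => a x η τ) = fun η => pd ee2 P (x, η, τ) from
        funext fun η => ha' x η τ]
      exact (hasDerivAt_line2 (pd ee2 P) x y τ (hDP1 ee2 _)).deriv
    have d4 : deriv (fun η => b x η τ) y = pd ee2 (pd ee2 Q) (x, y, τ) := by
      rw [show (fun η => b x η τ) = fun η => pd ee2 Q (x, η, τ) from
        funext fun η => hb' x η τ]
      exact (hasDerivAt_line2 (pd ee2 Q) x y τ (hDQ1 ee2 _)).deriv
    rw [hE, hp' x y τ, hq' x y τ, d1, d2, d3, d4, pow_two, pow_two]
  have hFline : (fun ξ => F ξ y t) = fun ξ =>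
      α/2 * (-(P (ξ, y, t)) * pd ee3 (pd ee1 P) (ξ, y, t)
        - Q (ξ, y, t) * pd ee3 (pd ee1 Q) (ξ, y, t)
        + pd ee1 P (ξ, y, t) * pd ee3 P (ξ, y, t)
        + pd ee1 Q (ξ, y, t) * pd ee3 Q (ξ, y, t)) := by
    funext ξ
    have d1 : deriv (fun τ => v ξ y τ) t = pd ee3 (pd ee1 P) (ξ, y, t) := by
      rw [show (fun τ => v ξ y τ) = fun τ => pd ee1 P (ξ, y, τ) from
        funext fun τ => hv' ξ y τ]
      exact (hasDerivAt_line3 (pd ee1 P) ξ y t (hDP1 ee1 _)).deriv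
    have d2 : deriv (fun τ => w ξ y τ) t = pd ee3 (pd ee1 Q) (ξ, y, t) := by
      rw [show (fun τ => w ξ y τ) = fun τ => pd ee1 Q (ξ, y, τ) from
        funext fun τ => hw' ξ y τ]
      exact (hasDerivAt_line3 (pd ee1 Q) ξ y t (hDQ1 ee1 _)).deriv
    have d3 : deriv (fun τ => p ξ y τ) t = pd ee3 P (ξ, y, t) := by
      rw [show (fun τ => p ξ y τ) = fun τ => P (ξ, y, τ) from
        funext fun τ => hp' ξ y τ]
      exact (hasDerivAt_line3 P ξ y t (hDP _)).deriv
    have d4 : deriv (fun τ => q ξ y τ) t = pd ee3 Q (ξ, y, t) := by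
      rw [show (fun τ => q ξ y τ) = fun τ => Q (ξ, y, τ) from
        funext fun τ => hq' ξ y τ]
      exact (hasDerivAt_line3 Q ξ y t (hDQ _)).deriv
    rw [hF, hp' ξ y t, hq' ξ y t, hv' ξ y t, hw' ξ y t, d1, d2, d3, d4]
  have hGline : (fun η => G x η t) = fun η =>
      α/2 * (-(P (x, η, t)) * pd ee3 (pd ee2 P) (x, η, t)
        - Q (x, η, t) * pd ee3 (pd ee2 Q) (x, η, t)
        + pd ee2 P (x, η, t) * pd ee3 P (x, η, t)
        + pd ee2 Q (x, η, t) * pd ee3 Q (x, η, t)) := by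
    funext η
    have d1 : deriv (fun τ => a x η τ) t = pd ee3 (pd ee2 P) (x, η, t) := by
      rw [show (fun τ => a x η τ) = fun τ => pd ee2 P (x, η, τ) from
        funext fun τ => ha' x η τ]
      exact (hasDerivAt_line3 (pd ee2 P) x η t (hDP1 ee2 _)).deriv
    have d2 : deriv (fun τ => b x η τ) t = pd ee3 (pd ee2 Q) (x, η, t) := by
      rw [show (fun τ => b x η τ) = fun τ => pd ee2 Q (x, η, τ) from
        funext fun τ => hb' x η τ]
      exact (hasDerivAt_line3 (pd ee2 Q) x η t (hDQ1 ee2 _)).deriv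
    have d3 : deriv (fun τ => p x η τ) t = pd ee3 P (x, η, t) := by
      rw [show (fun τ => p x η τ) = fun τ => P (x, η, τ) from
        funext fun τ => hp' x η τ]
      exact (hasDerivAt_line3 P x η t (hDP _)).deriv
    have d4 : deriv (fun τ => q x η τ) t = pd ee3 Q (x, η, t) := by
      rw [show (fun τ => q x η τ) = fun τ => Q (x, η, τ) from
        funext fun τ => hq' x η τ]
      exact (hasDerivAt_line3 Q x η t (hDQ _)).deriv
    rw [hG, hp' x η t, hq' x η t, ha' x η t, hb' x η t, d1, d2, d3, d4]
  -- derivatives of the three canonical expressions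
  have hPt : HasDerivAt (fun τ => P (x, y, τ)) (pd ee3 P (x, y, t)) t :=
    hasDerivAt_line3 P x y t (hDP _)
  have hQt : HasDerivAt (fun τ => Q (x, y, τ)) (pd ee3 Q (x, y, t)) t :=
    hasDerivAt_line3 Q x y t (hDQ _)
  have hP11t : HasDerivAt (fun τ => pd ee1 (pd ee1 P) (x, y, τ))
      (pd ee3 (pd ee1 (pd ee1 P)) (x, y, t)) t :=
    hasDerivAt_line3 (pd ee1 (pd ee1 P)) x y t (hDP2 ee1 ee1 _)
  have hQ11t : HasDerivAt (fun τ => pd ee1 (pd ee1 Q) (x, y, τ))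
      (pd ee3 (pd ee1 (pd ee1 Q)) (x, y, t)) t :=
    hasDerivAt_line3 (pd ee1 (pd ee1 Q)) x y t (hDQ2 ee1 ee1 _)
  have hP22t : HasDerivAt (fun τ => pd ee2 (pd ee2 P) (x, y, τ))
      (pd ee3 (pd ee2 (pd ee2 P)) (x, y, t)) t :=
    hasDerivAt_line3 (pd ee2 (pd ee2 P)) x y t (hDP2 ee2 ee2 _)
  have hQ22t : HasDerivAt (fun τ => pd ee2 (pd ee2 Q) (x, y, τ))
      (pd ee3 (pd ee2 (pd ee2 Q)) (x, y, t)) t :=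
    hasDerivAt_line3 (pd ee2 (pd ee2 Q)) x y t (hDQ2 ee2 ee2 _)
  have hVt : HasDerivAt
      (fun τ => V (P (x, y, τ) * P (x, y, τ) + Q (x, y, τ) * Q (x, y, τ)) x y)
      (V' (P (x, y, t) * P (x, y, t) + Q (x, y, t) * Q (x, y, t)) x y *
        (pd ee3 P (x, y, t) * P (x, y, t) + P (x, y, t) * pd ee3 P (x, y, t)
          + (pd ee3 Q (x, y, t) * Q (x, y, t) + Q (x, y, t) * pd ee3 Q (x, y, t)))) t :=
    (hV (P (x, y, t) * P (x, y, t) + Q (x, y, t) * Q (x, y, t)) x y).comp t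
      (h := fun τ => P (x, y, τ) * P (x, y, τ) + Q (x, y, τ) * Q (x, y, τ))
      ((hPt.mul hPt).add (hQt.mul hQt))
  have hbigE : HasDerivAt (fun τ =>
      1/2 * V (P (x, y, τ) * P (x, y, τ) + Q (x, y, τ) * Q (x, y, τ)) x y
      + α/2 * (P (x, y, τ) * pd ee1 (pd ee1 P) (x, y, τ)
        + Q (x, y, τ) * pd ee1 (pd ee1 Q) (x, y, τ)
        + P (x, y, τ) * pd ee2 (pd ee2 P) (x, y, τ)
        + Q (x, y, τ) * pd ee2 (pd ee2 Q) (x, y, τ)))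
      (1/2 * (V' (P (x, y, t) * P (x, y, t) + Q (x, y, t) * Q (x, y, t)) x y *
        (pd ee3 P (x, y, t) * P (x, y, t) + P (x, y, t) * pd ee3 P (x, y, t)
          + (pd ee3 Q (x, y, t) * Q (x, y, t) + Q (x, y, t) * pd ee3 Q (x, y, t))))
      + α/2 * (pd ee3 P (x, y, t) * pd ee1 (pd ee1 P) (x, y, t)
          + P (x, y, t) * pd ee3 (pd ee1 (pd ee1 P)) (x, y, t)
        + (pd ee3 Q (x, y, t) * pd ee1 (pd ee1 Q) (x, y, t)
          + Q (x, y, t) * pd ee3 (pd ee1 (pd ee1 Q)) (x, y, t))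
        + (pd ee3 P (x, y, t) * pd ee2 (pd ee2 P) (x, y, t)
          + P (x, y, t) * pd ee3 (pd ee2 (pd ee2 P)) (x, y, t))
        + (pd ee3 Q (x, y, t) * pd ee2 (pd ee2 Q) (x, y, t)
          + Q (x, y, t) * pd ee3 (pd ee2 (pd ee2 Q)) (x, y, t)))) t :=
    (hVt.const_mul (1/2)).add
      (((((hPt.mul hP11t).add (hQt.mul hQ11t)).add (hPt.mul hP22t)).add
        (hQt.mul hQ22t)).const_mul (α/2))
  have hPx : HasDerivAt (fun ξ => P (ξ, y, t)) (pd ee1 P (x, y, t)) x :=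
    hasDerivAt_line1 P x y t (hDP _)
  have hQx : HasDerivAt (fun ξ => Q (ξ, y, t)) (pd ee1 Q (x, y, t)) x :=
    hasDerivAt_line1 Q x y t (hDQ _)
  have hP31x : HasDerivAt (fun ξ => pd ee3 (pd ee1 P) (ξ, y, t))
      (pd ee1 (pd ee3 (pd ee1 P)) (x, y, t)) x :=
    hasDerivAt_line1 (pd ee3 (pd ee1 P)) x y t (hDP2 ee3 ee1 _)
  have hQ31x : HasDerivAt (fun ξ => pd ee3 (pd ee1 Q) (ξ, y, t))
      (pd ee1 (pd ee3 (pd ee1 Q)) (x, y, t)) x :=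
    hasDerivAt_line1 (pd ee3 (pd ee1 Q)) x y t (hDQ2 ee3 ee1 _)
  have hP1x : HasDerivAt (fun ξ => pd ee1 P (ξ, y, t))
      (pd ee1 (pd ee1 P) (x, y, t)) x :=
    hasDerivAt_line1 (pd ee1 P) x y t (hDP1 ee1 _)
  have hQ1x : HasDerivAt (fun ξ => pd ee1 Q (ξ, y, t))
      (pd ee1 (pd ee1 Q) (x, y, t)) x :=
    hasDerivAt_line1 (pd ee1 Q) x y t (hDQ1 ee1 _)
  have hP3x : HasDerivAt (fun ξ => pd ee3 P (ξ, y, t))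
      (pd ee1 (pd ee3 P) (x, y, t)) x :=
    hasDerivAt_line1 (pd ee3 P) x y t (hDP1 ee3 _)
  have hQ3x : HasDerivAt (fun ξ => pd ee3 Q (ξ, y, t))
      (pd ee1 (pd ee3 Q) (x, y, t)) x :=
    hasDerivAt_line1 (pd ee3 Q) x y t (hDQ1 ee3 _)
  have hbigF : HasDerivAt (fun ξ =>
      α/2 * (-(P (ξ, y, t)) * pd ee3 (pd ee1 P) (ξ, y, t)
        - Q (ξ, y, t) * pd ee3 (pd ee1 Q) (ξ, y, t)
        + pd ee1 P (ξ, y, t) * pd ee3 P (ξ, y, t)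
        + pd ee1 Q (ξ, y, t) * pd ee3 Q (ξ, y, t)))
      (α/2 * (-pd ee1 P (x, y, t) * pd ee3 (pd ee1 P) (x, y, t)
          + -P (x, y, t) * pd ee1 (pd ee3 (pd ee1 P)) (x, y, t)
        - (pd ee1 Q (x, y, t) * pd ee3 (pd ee1 Q) (x, y, t)
          + Q (x, y, t) * pd ee1 (pd ee3 (pd ee1 Q)) (x, y, t))
        + (pd ee1 (pd ee1 P) (x, y, t) * pd ee3 P (x, y, t)
          + pd ee1 P (x, y, t) * pd ee1 (pd ee3 P) (x, y, t))
        + (pd ee1 (pd ee1 Q) (x, y, t) * pd ee3 Q (x, y, t)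
          + pd ee1 Q (x, y, t) * pd ee1 (pd ee3 Q) (x, y, t)))) x :=
    (((((hPx.neg).mul hP31x).sub (hQx.mul hQ31x)).add (hP1x.mul hP3x)).add
      (hQ1x.mul hQ3x)).const_mul (α/2)
  have hPy : HasDerivAt (fun η => P (x, η, t)) (pd ee2 P (x, y, t)) y :=
    hasDerivAt_line2 P x y t (hDP _)
  have hQy : HasDerivAt (fun η => Q (x, η, t)) (pd ee2 Q (x, y, t)) y :=
    hasDerivAt_line2 Q x y t (hDQ _)
  have hP32y : HasDerivAt (fun η => pd ee3 (pd ee2 P) (x, η, t))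
      (pd ee2 (pd ee3 (pd ee2 P)) (x, y, t)) y :=
    hasDerivAt_line2 (pd ee3 (pd ee2 P)) x y t (hDP2 ee3 ee2 _)
  have hQ32y : HasDerivAt (fun η => pd ee3 (pd ee2 Q) (x, η, t))
      (pd ee2 (pd ee3 (pd ee2 Q)) (x, y, t)) y :=
    hasDerivAt_line2 (pd ee3 (pd ee2 Q)) x y t (hDQ2 ee3 ee2 _)
  have hP2y : HasDerivAt (fun η => pd ee2 P (x, η, t))
      (pd ee2 (pd ee2 P) (x, y, t)) y :=
    hasDerivAt_line2 (pd ee2 P) x y t (hDP1 ee2 _)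
  have hQ2y : HasDerivAt (fun η => pd ee2 Q (x, η, t))
      (pd ee2 (pd ee2 Q) (x, y, t)) y :=
    hasDerivAt_line2 (pd ee2 Q) x y t (hDQ1 ee2 _)
  have hP3y : HasDerivAt (fun η => pd ee3 P (x, η, t))
      (pd ee2 (pd ee3 P) (x, y, t)) y :=
    hasDerivAt_line2 (pd ee3 P) x y t (hDP1 ee3 _)
  have hQ3y : HasDerivAt (fun η => pd ee3 Q (x, η, t))
      (pd ee2 (pd ee3 Q) (x, y, t)) y :=
    hasDerivAt_line2 (pd ee3 Q) x y t (hDQ1 ee3 _)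
  have hbigG : HasDerivAt (fun η =>
      α/2 * (-(P (x, η, t)) * pd ee3 (pd ee2 P) (x, η, t)
        - Q (x, η, t) * pd ee3 (pd ee2 Q) (x, η, t)
        + pd ee2 P (x, η, t) * pd ee3 P (x, η, t)
        + pd ee2 Q (x, η, t) * pd ee3 Q (x, η, t)))
      (α/2 * (-pd ee2 P (x, y, t) * pd ee3 (pd ee2 P) (x, y, t)
          + -P (x, y, t) * pd ee2 (pd ee3 (pd ee2 P)) (x, y, t)
        - (pd ee2 Q (x, y, t) * pd ee3 (pd ee2 Q) (x, y, t)
          + Q (x, y, t) * pd ee2 (pd ee3 (pd ee2 Q)) (x, y, t))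
        + (pd ee2 (pd ee2 P) (x, y, t) * pd ee3 P (x, y, t)
          + pd ee2 P (x, y, t) * pd ee2 (pd ee3 P) (x, y, t))
        + (pd ee2 (pd ee2 Q) (x, y, t) * pd ee3 Q (x, y, t)
          + pd ee2 Q (x, y, t) * pd ee2 (pd ee3 Q) (x, y, t)))) y :=
    (((((hPy.neg).mul hP32y).sub (hQy.mul hQ32y)).add (hP2y.mul hP3y)).add
      (hQ2y.mul hQ3y)).const_mul (α/2)
  -- the PDE in components
  have hct : deriv (fun τ => ψ x y τ) t = pd ee3 u (x, y, t) :=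
    (hasDerivAt_line3 u x y t (hdu _)).deriv
  have hcxx : deriv (fun ξ => deriv (fun ξ' => ψ ξ' y t) ξ) x
      = pd ee1 (pd ee1 u) (x, y, t) := by
    have hinner : (fun ξ => deriv (fun ξ' => ψ ξ' y t) ξ) = fun ξ => pd ee1 u (ξ, y, t) := by
      funext ξ
      exact (hasDerivAt_line1 u ξ y t (hdu _)).deriv
    rw [hinner]
    exact (hasDerivAt_line1 (pd ee1 u) x y t (hdu1 ee1 _)).deriv
  have hcyy : deriv (fun η => deriv (fun η' => ψ x η' t) η) y
      = pd ee2 (pd ee2 u) (x, y, t) := by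
    have hinner : (fun η => deriv (fun η' => ψ x η' t) η) = fun η => pd ee2 u (x, η, t) := by
      funext η
      exact (hasDerivAt_line2 u x η t (hdu _)).deriv
    rw [hinner]
    exact (hasDerivAt_line2 (pd ee2 u) x y t (hdu1 ee2 _)).deriv
  have hns : Complex.normSq (ψ x y t)
      = P (x, y, t) * P (x, y, t) + Q (x, y, t) * Q (x, y, t) :=
    Complex.normSq_apply (u (x, y, t))
  have h0 := hpde x y t
  rw [hct, hcxx, hcyy, hns] at h0
  have hre := congrArg Complex.re h0
  have him := congrArg Complex.im h0
  simp only [Complex.add_re, Complex.add_im, Complex.mul_re, Complex.mul_im,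
    Complex.I_re, Complex.I_im, Complex.ofReal_re, Complex.ofReal_im,
    Complex.zero_re, Complex.zero_im, zero_mul, one_mul, zero_sub, sub_zero,
    zero_add, add_zero, neg_zero, mul_zero] at hre him
  -- bridge between complex partials and real partials
  have bridgeP : ∀ (e : XX) (z : XX), (pd e u z).re = pd e P z :=
    fun e z => (pd_re (hdu z) e).symm
  have bridgeQ : ∀ (e : XX) (z : XX), (pd e u z).im = pd e Q z :=
    fun e z => (pd_im (hdu z) e).symm
  have bridgeP2 : ∀ (e e' : XX) (z : XX), (pd e (pd e' u) z).re = pd e (pd e' P) z := by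
    intro e e' z
    have h1 : pd e' P = fun w => (pd e' u w).re := by
      funext w'
      exact pd_re (hdu w') e'
    rw [h1]
    exact (pd_re (hdu1 e' z) e).symm
  have bridgeQ2 : ∀ (e e' : XX) (z : XX), (pd e (pd e' u) z).im = pd e (pd e' Q) z := by
    intro e e' z
    have h1 : pd e' Q = fun w => (pd e' u w).im := by
      funext w'
      exact pd_im (hdu w') e'
    rw [h1]
    exact (pd_im (hdu1 e' z) e).symm
  have hψre : (ψ x y t).re = P (x, y, t) := rfl
  have hψim : (ψ x y t).im = Q (x, y, t) := rfl
  rw [bridgeQ ee3, bridgeP2 ee1 ee1, bridgeP2 ee2 ee2, hψre] at hre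
  rw [bridgeP ee3, bridgeQ2 ee1 ee1, bridgeQ2 ee2 ee2, hψim] at him
  -- symmetry of second partials
  have hP2' : ContDiff ℝ 2 P := hP.of_le (by norm_num)
  have hQ2' : ContDiff ℝ 2 Q := hQ.of_le (by norm_num)
  have sP1 : pd ee1 (pd ee3 P) (x, y, t) = pd ee3 (pd ee1 P) (x, y, t) :=
    pd_comm hP2' ee1 ee3 _
  have sQ1 : pd ee1 (pd ee3 Q) (x, y, t) = pd ee3 (pd ee1 Q) (x, y, t) :=
    pd_comm hQ2' ee1 ee3 _
  have sP2 : pd ee1 (pd ee3 (pd ee1 P)) (x, y, t)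
      = pd ee3 (pd ee1 (pd ee1 P)) (x, y, t) := pd_comm (hpd1 P hP ee1) ee1 ee3 _
  have sQ2 : pd ee1 (pd ee3 (pd ee1 Q)) (x, y, t)
      = pd ee3 (pd ee1 (pd ee1 Q)) (x, y, t) := pd_comm (hpd1 Q hQ ee1) ee1 ee3 _
  have sP3 : pd ee2 (pd ee3 P) (x, y, t) = pd ee3 (pd ee2 P) (x, y, t) :=
    pd_comm hP2' ee2 ee3 _
  have sQ3 : pd ee2 (pd ee3 Q) (x, y, t) = pd ee3 (pd ee2 Q) (x, y, t) :=
    pd_comm hQ2' ee2 ee3 _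
  have sP4 : pd ee2 (pd ee3 (pd ee2 P)) (x, y, t)
      = pd ee3 (pd ee2 (pd ee2 P)) (x, y, t) := pd_comm (hpd1 P hP ee2) ee2 ee3 _
  have sQ4 : pd ee2 (pd ee3 (pd ee2 Q)) (x, y, t)
      = pd ee3 (pd ee2 (pd ee2 Q)) (x, y, t) := pd_comm (hpd1 Q hQ ee2) ee2 ee3 _
  rw [hEline, hFline, hGline, hbigE.deriv, hbigF.deriv, hbigG.deriv,
    sP1, sQ1, sP2, sQ2, sP3, sQ3, sP4, sQ4]
  linear_combination pd ee3 P (x, y, t) * hre + pd ee3 Q (x, y, t) * him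
end
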